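/- arXiv:2502.14484 — 8 statements merged into one kernel-verified Lean document; each statement's English description precedes it below -/
import Mathlib

section
/- Let F₀(t) = (1−t)·D₀ + t·D₁ for t ∈ ℝ (a variable point on the line L₀), and let N₀(t) be the line through F₀(t) and R(F₀(t)). Then N₀(t) has nonempty intersection with the circle 𝒞 if and only if F₀(t) is one of the two points L₀ ∩ L₋₃ or L₀ ∩ L₃; moreover, for these two positions the line N₀(t) is tangent to 𝒞, i.e., it meets 𝒞 in exactly one point. -/
/- STATEMENT 0: With D_i the vertices of a regular 9-gon (rotated by 17π/18), L_i the line
through D_i and D_{i+1}, R the rotation by 8π/9 about the origin O, 𝒞 the circle through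
D₋₁, D₋₃ and O, and F₀(t) = (1-t)·D₀ + t·D₁, N₀(t) the line through F₀(t) and R(F₀(t)):
N₀(t) meets 𝒞 iff F₀(t) is one of the two points L₀ ∩ L₋₃ or L₀ ∩ L₃, and in those
positions N₀(t) is tangent to 𝒞 (meets it in exactly one point). -/

open Real

noncomputable section

abbrev Pt := EuclideanSpace ℝ (Fin 2)

/-- The point of ℝ² with coordinates `(x, y)`. -/
def pt (x y : ℝ) : Pt := (WithLp.equiv 2 _).symm ![x, y]

/-- The affine line through two points `A` and `B`. -/
def lineThrough (A B : Pt) : Set Pt := {P | ∃ t : ℝ, P = A + t • (B - A)}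

/-- Counterclockwise rotation by angle `θ` about the point `c`. -/
def rotAbout (θ : ℝ) (c p : Pt) : Pt :=
  pt (c 0 + Real.cos θ * (p 0 - c 0) - Real.sin θ * (p 1 - c 1))
     (c 1 + Real.sin θ * (p 0 - c 0) + Real.cos θ * (p 1 - c 1))

/-- The origin. -/
def O : Pt := pt 0 0

/-- Vertices of the regular 9-gon: `D i = (cos(2πi/9 + 17π/18), sin(2πi/9 + 17π/18))`. -/
def D (i : ℤ) : Pt :=
  pt (Real.cos (2 * π * i / 9 + 17 * π / 18)) (Real.sin (2 * π * i / 9 + 17 * π / 18))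

/-- The line `L i` through `D i` and `D (i+1)`. -/
def L (i : ℤ) : Set Pt := lineThrough (D i) (D (i + 1))

/-- The variable point `F₀(t) = (1-t)·D₀ + t·D₁` on the line `L₀`. -/
def F₀ (t : ℝ) : Pt := (1 - t) • D 0 + t • D 1

/-- The line `N₀(t)` through `F₀(t)` and its rotate by 8π/9 about the origin. -/
def N₀ (t : ℝ) : Set Pt := lineThrough (F₀ t) (rotAbout (8 * π / 9) O (F₀ t))


lemma pt0 (x y : ℝ) : pt x y 0 = x := rfl
lemma pt1 (x y : ℝ) : pt x y 1 = y := rfl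

lemma Pt.ext' {X Y : Pt} (h0 : X 0 = Y 0) (h1 : X 1 = Y 1) : X = Y := by
  ext i; fin_cases i <;> assumption

lemma pt_congr {a b a' b' : ℝ} (h1 : a = a') (h2 : b = b') : pt a b = pt a' b' := by rw [h1, h2]

lemma pt_comb (a b c d u : ℝ) : pt a b + u • (pt c d - pt a b) = pt (a + u*(c-a)) (b + u*(d-b)) := by
  ext i; fin_cases i <;> · simp [pt]; try ring

lemma mem_lineThrough_iff (A B P : Pt) :
    P ∈ lineThrough A B ↔ ∃ r : ℝ, P 0 = A 0 + r * (B 0 - A 0) ∧ P 1 = A 1 + r * (B 1 - A 1) := by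
  constructor
  · rintro ⟨r, rfl⟩
    exact ⟨r, by simp [smul_eq_mul], by simp [smul_eq_mul]⟩
  · rintro ⟨r, h0, h1⟩
    refine ⟨r, Pt.ext' ?_ ?_⟩ <;> simp [smul_eq_mul, h0, h1]

lemma mem_sphere_coord (X c : Pt) (r : ℝ) (hr : 0 ≤ r) :
    X ∈ Metric.sphere c r ↔ (X 0 - c 0)^2 + (X 1 - c 1)^2 = r^2 := by
  rw [mem_sphere_iff_norm]
  constructor
  · intro h
    rw [← h, EuclideanSpace.norm_eq, Real.sq_sqrt (by positivity)]
    simp [Fin.sum_univ_two, sq]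
  · intro h
    have hn : ‖X - c‖ ^ 2 = r ^ 2 := by
      rw [EuclideanSpace.norm_eq, Real.sq_sqrt (by positivity)]
      simp only [Fin.sum_univ_two, sq] at h ⊢
      simpa using h
    have h2 : (‖X - c‖ - r) * (‖X - c‖ + r) = 0 := by nlinarith [hn]
    have h3 : (0:ℝ) ≤ ‖X - c‖ := norm_nonneg (X - c)
    rcases mul_eq_zero.1 h2 with h4|h4 <;> linarith

lemma cross_to_param' (A0 A1 B0 B1 p q : ℝ)
    (h : (p - A0) * (B1 - A1) - (q - A1) * (B0 - A0) = 0)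
    (hd : (B0 - A0)^2 + (B1 - A1)^2 ≠ 0) :
    ∃ r : ℝ, p = A0 + r * (B0 - A0) ∧ q = A1 + r * (B1 - A1) := by
  refine ⟨((p - A0) * (B0 - A0) + (q - A1) * (B1 - A1)) / ((B0 - A0)^2 + (B1 - A1)^2), ?_, ?_⟩
  · rw [div_mul_eq_mul_div, eq_comm, add_comm, div_add' _ _ _ hd, div_eq_iff hd]
    linear_combination -(B1 - A1) * h
  · rw [div_mul_eq_mul_div, eq_comm, add_comm, div_add' _ _ _ hd, div_eq_iff hd]
    linear_combination (B0 - A0) * h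


lemma quad_iff_zero (Q Y X W b : ℝ) (hY2 : (0:ℝ) < 4*Y^2)
    (hsc : Q = 4*Y^2*((X - 0)^2 + (W - b)^2 - b^2)) :
    ((X - 0)^2 + (W - b)^2 = b^2) ↔ Q = 0 := by
  constructor
  · intro h
    have hT : (X - 0)^2 + (W - b)^2 - b^2 = 0 := by linarith
    rw [hT, mul_zero] at hsc
    exact hsc
  · intro h
    rw [h] at hsc
    have hT : (X - 0)^2 + (W - b)^2 - b^2 = 0 := by
      rcases mul_eq_zero.1 hsc.symm with h'|h'
      · exact absurd h' (ne_of_gt hY2)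
      · exact h'
    linarith

lemma quad_core (A B E ν q : ℝ) (hA : 0 < A) (hν : 0 < ν)
    (hcomp : ∀ u : ℝ, 4*A*(A*u^2+B*u+E) = (2*A*u+B)^2 + ν*q^2) :
    ((∃ u : ℝ, A*u^2+B*u+E = 0) ↔ q = 0) ∧
    (∀ u u' : ℝ, A*u^2+B*u+E = 0 → A*u'^2+B*u'+E = 0 → u = u') := by
  have hAne : A ≠ 0 := ne_of_gt hA
  have hsq : ∀ u : ℝ, A*u^2+B*u+E = 0 → (2*A*u+B) = 0 ∧ ν*q^2 = 0 := by
    intro u hu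
    have h8 := hcomp u
    rw [hu, mul_zero] at h8
    have h9 : (2*A*u+B)^2 = 0 := by nlinarith [sq_nonneg (2*A*u+B), sq_nonneg q]
    have h10 : ν*q^2 = 0 := by nlinarith [sq_nonneg (2*A*u+B), sq_nonneg q]
    exact ⟨pow_eq_zero_iff two_ne_zero |>.1 h9, h10⟩
  constructor
  · constructor
    · rintro ⟨u, hu⟩
      have h10 := (hsq u hu).2
      have h11 : q^2 = 0 := by
        rcases mul_eq_zero.1 h10 with h'|h'
        · exact absurd h' (ne_of_gt hν)
        · exact h'
      exact pow_eq_zero_iff two_ne_zero |>.1 h11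
    · intro hq
      refine ⟨-B/(2*A), ?_⟩
      have h8 := hcomp (-B/(2*A))
      rw [hq] at h8
      have h9 : 2*A*(-B/(2*A)) + B = 0 := by field_simp; ring
      rw [h9] at h8
      have h10 : 4*A*(A*(-B/(2*A))^2+B*(-B/(2*A))+E) = 0 := by rw [h8]; ring
      have h11 : (4:ℝ)*A ≠ 0 := by positivity
      exact (mul_eq_zero.1 h10).resolve_left h11
  · intro u u' hu hu'
    have h9 := (hsq u hu).1
    have h9' := (hsq u' hu').1
    have h12 : 2*A*u = 2*A*u' := by linarith
    have h13 : (2*A) ≠ 0 := by positivity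
    exact mul_left_cancel₀ h13 h12

lemma cos2 : Real.cos (2*(π/18)) = 2*(Real.cos (π/18))^2-1 := Real.cos_two_mul _
lemma sin2 : Real.sin (2*(π/18)) = 2*(Real.sin (π/18))*(Real.cos (π/18)) := Real.sin_two_mul _
lemma cos4 : Real.cos (4*(π/18)) = 2*(2*(Real.cos (π/18))^2-1)^2-1 := by
  rw [show (4:ℝ)*(π/18) = 2*(2*(π/18)) by ring, Real.cos_two_mul, cos2]
lemma sin4 : Real.sin (4*(π/18)) = 2*(2*(Real.sin (π/18))*(Real.cos (π/18)))*(2*(Real.cos (π/18))^2-1) := by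
  rw [show (4:ℝ)*(π/18) = 2*(2*(π/18)) by ring, Real.sin_two_mul, cos2, sin2]

lemma hD0 : D 0 = pt (-(Real.cos (π/18))) (Real.sin (π/18)) := by
  unfold D
  rw [show (2 * π * ((0:ℤ):ℝ) / 9 + 17 * π / 18 : ℝ) = π - π/18 by push_cast; ring,
    Real.cos_pi_sub, Real.sin_pi_sub]

lemma hD1 : D 1 = pt (-(4*(Real.cos (π/18))^3-3*(Real.cos (π/18)))) (-(-4*(Real.sin (π/18))^3+3*(Real.sin (π/18)))) := by
  unfold D
  rw [show (2 * π * ((1:ℤ):ℝ) / 9 + 17 * π / 18 : ℝ) = π + 3*(π/18) by push_cast; ring,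
    Real.cos_add, Real.sin_add]
  exact pt_congr (by rw [Real.cos_three_mul]; simp; try ring) (by rw [Real.sin_three_mul]; simp; try ring)

lemma hDm2 : D (-2) = pt 0 1 := by
  unfold D
  rw [show (2 * π * ((-2:ℤ):ℝ) / 9 + 17 * π / 18 : ℝ) = π/2 by push_cast; ring,
    Real.cos_pi_div_two, Real.sin_pi_div_two]

lemma hDm3 : D (-3) = pt (8*(Real.cos (π/18))^3*(Real.sin (π/18))-4*(Real.cos (π/18))*(Real.sin (π/18))) (8*(Real.cos (π/18))^4-8*(Real.cos (π/18))^2+1) := by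
  unfold D
  rw [show (2 * π * ((-3:ℤ):ℝ) / 9 + 17 * π / 18 : ℝ) = π/2 - 4*(π/18) by push_cast; ring,
    Real.cos_pi_div_two_sub, Real.sin_pi_div_two_sub]
  exact pt_congr (by rw [sin4]; try ring) (by rw [cos4]; try ring)

lemma hDm1 : D (-1) = pt (-(8*(Real.cos (π/18))^3*(Real.sin (π/18))-4*(Real.cos (π/18))*(Real.sin (π/18)))) (8*(Real.cos (π/18))^4-8*(Real.cos (π/18))^2+1) := by
  unfold D
  rw [show (2 * π * ((-1:ℤ):ℝ) / 9 + 17 * π / 18 : ℝ) = π - (π/2 - 4*(π/18)) by push_cast; ring,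
    Real.cos_pi_sub, Real.sin_pi_sub, Real.cos_pi_div_two_sub, Real.sin_pi_div_two_sub]
  exact pt_congr (by rw [sin4]; try ring) (by rw [cos4]; try ring)

lemma hD3 : D 3 = pt (2*(Real.cos (π/18))*(Real.sin (π/18))) (-(2*(Real.cos (π/18))^2-1)) := by
  unfold D
  rw [show (2 * π * ((3:ℤ):ℝ) / 9 + 17 * π / 18 : ℝ) = 2*π - (π/2 - 2*(π/18)) by push_cast; ring,
    Real.cos_two_pi_sub, Real.sin_two_pi_sub, Real.cos_pi_div_two_sub, Real.sin_pi_div_two_sub]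
  exact pt_congr (by rw [sin2]; try ring) (by rw [cos2]; try ring)

lemma hD4 : D 4 = pt (4*(Real.cos (π/18))^3-3*(Real.cos (π/18))) (-(-4*(Real.sin (π/18))^3+3*(Real.sin (π/18)))) := by
  unfold D
  rw [show (2 * π * ((4:ℤ):ℝ) / 9 + 17 * π / 18 : ℝ) = 2*π - 3*(π/18) by push_cast; ring,
    Real.cos_two_pi_sub, Real.sin_two_pi_sub, Real.cos_three_mul, Real.sin_three_mul]
  exact pt_congr (by ring) (by ring)

lemma hcos8 : Real.cos (8*π/9) = -(2*(Real.cos (π/18))^2-1) := by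
  rw [show (8*π/9 : ℝ) = π - 2*(π/18) by ring, Real.cos_pi_sub, cos2]; try ring
lemma hsin8 : Real.sin (8*π/9) = (2*(Real.cos (π/18))*(Real.sin (π/18))) := by
  rw [show (8*π/9 : ℝ) = π - 2*(π/18) by ring, Real.sin_pi_sub, sin2]; try ring

set_option maxHeartbeats 4000000 in
theorem gray_Z9_tangency
    (C : Set Pt) (ctr : Pt) (rad : ℝ)
    (hC : C = Metric.sphere ctr rad)
    (h1 : D (-1) ∈ C) (h2 : D (-3) ∈ C) (h3 : O ∈ C) (t : ℝ) :
    ((N₀ t ∩ C).Nonempty ↔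
      (F₀ t ∈ L 0 ∩ L (-3) ∨ F₀ t ∈ L 0 ∩ L 3)) ∧
    ((F₀ t ∈ L 0 ∩ L (-3) ∨ F₀ t ∈ L 0 ∩ L 3) →
      ∃! X : Pt, X ∈ N₀ t ∩ C) := by
  subst hC
  -- trig base facts
  obtain ⟨s, hs⟩ : ∃ x, Real.sin (π/18) = x := ⟨_, rfl⟩
  obtain ⟨c, hc⟩ : ∃ x, Real.cos (π/18) = x := ⟨_, rfl⟩
  have hPy : s^2 + c^2 = 1 := by rw [← hs, ← hc]; exact Real.sin_sq_add_cos_sq _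
  have hCu : 3*s - 4*s^3 = 1/2 := by
    have h3m := Real.sin_three_mul (π/18)
    rw [show (3:ℝ)*(π/18) = π/6 by ring, Real.sin_pi_div_six, hs] at h3m
    linarith
  have hs0 : 0 < s := hs ▸ Real.sin_pos_of_pos_of_lt_pi (by positivity) (by nlinarith [Real.pi_pos])
  have hsub : s < 0.18 := by
    have hl := Real.sin_lt (show (0:ℝ) < π/18 by positivity)
    rw [hs] at hl
    nlinarith [Real.pi_lt_d2]
  have hslb : 1/6 < s := by
    have h8 : (0:ℝ) < 8*s^3 := by positivity
    linarith [hCu, h8]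
  have hc0 : 0 < c := hc ▸ Real.cos_pos_of_mem_Ioo
    ⟨by nlinarith [Real.pi_pos], by nlinarith [Real.pi_pos]⟩
  have hc1 : c ≤ 1 := hc ▸ Real.cos_le_one _
  have hclb : 0.98 < c := by nlinarith [hPy, hs0, hsub, hc0]
  have hc4pos : (0:ℝ) < (8*c^4-8*c^2+1) := by nlinarith [hclb, hc1, hc0]
  have hs4pos : (0:ℝ) < (8*c^3*s-4*c*s) := by nlinarith [hclb, hc1, hc0, hs0, hslb, mul_pos hs0 hc0]
  -- early nonlinear facts
  have hAfact : (16*s^2*t^2+16*s*t^2-16*s^2*t+1*t^2-16*s*t-8*s^2-1*t+2*s+9) = 16*(8*c^4-8*c^2+1)^2*c^2*(4*s^2*c^2*(2*t-1)^2 + (1 - 4*s^2*c^2)) := by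
    linear_combination (16384*s^12*t^2-16384*c^2*s^10*t^2+16384*c^4*s^8*t^2-16384*c^6*s^6*t^2+16384*c^8*s^4*t^2-16384*c^10*s^2*t^2-16384*s^12*t+16384*c^2*s^10*t-16384*c^4*s^8*t+16384*c^6*s^6*t-16384*c^8*s^4*t+16384*c^10*s^2*t-49152*s^10*t^2+32768*c^2*s^8*t^2-16384*c^4*s^6*t^2+16384*c^8*s^2*t^2+49152*s^10*t-32768*c^2*s^8*t+16384*c^4*s^6*t-16384*c^8*s^2*t+53248*s^8*t^2-20480*c^2*s^6*t^2+4096*c^4*s^4*t^2-4096*c^6*s^2*t^2-53248*s^8*t+20480*c^2*s^6*t-4096*c^4*s^4*t+4096*c^6*s^2*t-24576*s^6*t^2-1024*s^8+4096*c^2*s^4*t^2+1024*c^2*s^6-1024*c^4*s^4+1024*c^6*s^2-1024*c^8+24576*s^6*t-4096*c^2*s^4*t+4352*s^4*t^2+2048*s^6-256*c^2*s^2*t^2-1024*c^2*s^4+1024*c^6-4352*s^4*t+256*c^2*s^2*t-256*s^2*t^2-1280*s^4+256*c^2*s^2-256*c^4+256*s^2*t+256*s^2-16)*hPy + (4096*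s^11*t^2-4096*s^11*t-13312*s^9*t^2-512*s^8*t^2+13312*s^9*t+15616*s^7*t^2+512*s^8*t+1280*s^6*t^2-15616*s^7*t-7680*s^5*t^2-1280*s^6*t-256*s^7-992*s^4*t^2+7680*s^5*t+1312*s^3*t^2+992*s^4*t+576*s^5+216*s^2*t^2-1312*s^3*t+32*s^4-44*s*t^2-216*s^2*t-400*s^3-2*t^2+44*s*t-48*s^2+2*t+80*s+14)*hCu
  have h4sc : (0:ℝ) < 1 - 4*s^2*c^2 := by nlinarith [hs0, hsub, hc0, hc1]
  have hApos : (0:ℝ) < (16*s^2*t^2+16*s*t^2-16*s^2*t+1*t^2-16*s*t-8*s^2-1*t+2*s+9) := by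
    rw [hAfact]
    have h16 : (0:ℝ) < 16*(8*c^4-8*c^2+1)^2*c^2 := by nlinarith [hc4pos, hc0, mul_pos hc4pos hc4pos, mul_pos (mul_pos hc4pos hc4pos) (mul_pos hc0 hc0)]
    have hbr : (0:ℝ) < 4*s^2*c^2*(2*t-1)^2 + (1 - 4*s^2*c^2) := by
      nlinarith [sq_nonneg (2*t-1), sq_nonneg (s*c*(2*t-1))]
    exact mul_pos h16 hbr
  have hnupos : (0:ℝ) < (-(704/27)*s^2-(32/27)*s+(592/27)) := by nlinarith [hs0, hsub]
  have hY2 : (0:ℝ) < 4*(8*c^4-8*c^2+1)^2 := by nlinarith [mul_pos hc4pos hc4pos]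
  have hden1 : ((0:ℝ) - (8*c^3*s-4*c*s))^2 + (1 - (8*c^4-8*c^2+1))^2 ≠ 0 := by
    nlinarith [mul_pos hs4pos hs4pos, sq_nonneg (1 - (8*c^4-8*c^2+1))]
  have hden2 : (((4*c^3-3*c) - (2*c*s))^2 + ((-(-4*s^3+3*s)) - (-(2*c^2-1)))^2 : ℝ) ≠ 0 := by
    nlinarith [hclb, hc1, hc0, hs0, hsub, hslb, hPy]
  -- circle data
  have hdO : dist O ctr = rad := h3
  have hrad0 : 0 ≤ rad := hdO ▸ dist_nonneg
  have h1' := (mem_sphere_coord _ ctr rad hrad0).1 h1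
  have h2' := (mem_sphere_coord _ ctr rad hrad0).1 h2
  have h3' := (mem_sphere_coord _ ctr rad hrad0).1 h3
  rw [hDm1, pt0, pt1] at h1'
  rw [hDm3, pt0, pt1] at h2'
  rw [show O = pt 0 0 from rfl, pt0, pt1] at h3'
  simp only [hs, hc] at h1' h2'
  have ha : ctr 0 = 0 := by
    have h4 : (8*c^3*s-4*c*s) * (ctr 0) = 0 := by linear_combination (1/4)*h1' - (1/4)*h2'
    exact (mul_eq_zero.1 h4).resolve_left (ne_of_gt hs4pos)
  rw [ha] at h1' h2' h3'
  have hb : 2*(ctr 1)*(8*c^4-8*c^2+1) = 1 := by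
    linear_combination h3' - h2' + (64*c^6-64*c^4+16*c^2)*hPy
  have hrad2 : rad^2 = (ctr 1)^2 := by linear_combination -h3'
  -- coordinates of the moving point and its rotate
  have hF : F₀ t = pt (-4*c^3*t+4*c*t-1*c) (4*s^3*t-4*s*t+1*s) := by
    rw [F₀, hD0, hD1]
    refine Pt.ext' ?_ ?_ <;>
      · simp only [PiLp.add_apply, PiLp.smul_apply, smul_eq_mul, pt0, pt1]
        simp only [hs, hc]
        ring
  have hR : rotAbout (8*π/9) O (F₀ t) = pt (-8*c*s^4*t+8*c^5*t+8*c*s^2*t-12*c^3*t-2*c*s^2+2*c^3+4*c*t-1*c) (-8*c^2*s^3*t-8*c^4*s*t+4*s^3*t+16*c^2*s*t-4*c^2*s-4*s*t+1*s) := by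
    rw [rotAbout, hF, hcos8, hsin8]
    refine pt_congr ?_ ?_ <;> · simp only [pt0, pt1, O]; simp only [hs, hc]; ring
  have hcomb : ∀ u : ℝ, F₀ t + u • (rotAbout (8*π/9) O (F₀ t) - F₀ t)
      = pt ((-4*c^3*t+4*c*t-1*c) + u*(-8*c*s^4*t+8*c^5*t+8*c*s^2*t-8*c^3*t-2*c*s^2+2*c^3)) ((4*s^3*t-4*s*t+1*s) + u*(-8*c^2*s^3*t-8*c^4*s*t+16*c^2*s*t-4*c^2*s)) := by
    intro u
    rw [hR, hF, pt_comb]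
    exact pt_congr (by ring) (by ring)
  have hNmem : ∀ X : Pt, X ∈ N₀ t ↔ ∃ u : ℝ, X = pt ((-4*c^3*t+4*c*t-1*c) + u*(-8*c*s^4*t+8*c^5*t+8*c*s^2*t-8*c^3*t-2*c*s^2+2*c^3)) ((4*s^3*t-4*s*t+1*s) + u*(-8*c^2*s^3*t-8*c^4*s*t+16*c^2*s*t-4*c^2*s)) := by
    intro X
    simp only [N₀, lineThrough, Set.mem_setOf_eq, hcomb]
  -- the quadratic
  have hscale : ∀ u : ℝ, (16*s^2*t^2+16*s*t^2-16*s^2*t+1*t^2-16*s*t-8*s^2-1*t+2*s+9)*u^2 + (-16*s^2*t^2-16*s*t^2+32*s^2*t-1*t^2+24*s*t-5*t-6*s-6)*u + (12*s^2*t^2+10*s*t^2-20*s^2*t-1*t^2-14*s*t+4*s^2+4*t+4*s+1)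
      = 4*(8*c^4-8*c^2+1)^2*((((-4*c^3*t+4*c*t-1*c) + u*(-8*c*s^4*t+8*c^5*t+8*c*s^2*t-8*c^3*t-2*c*s^2+2*c^3)) - 0)^2 + (((4*s^3*t-4*s*t+1*s) + u*(-8*c^2*s^3*t-8*c^4*s*t+16*c^2*s*t-4*c^2*s)) - ctr 1)^2 - (ctr 1)^2) := by
    intro u
    linear_combination (-((16384*c^10*s^6*t^2+16384*c^16*t^2-32768*c^8*s^6*t^2-16384*c^10*s^4*t^2-16384*c^12*s^2*t^2-49152*c^14*t^2+8192*c^10*s^4*t+8192*c^14*t-16384*s^12*t^2+16384*c^2*s^10*t^2-16384*c^4*s^8*t^2+36864*c^6*s^6*t^2+16384*c^8*s^4*t^2+49152*c^10*s^2*t^2+53248*c^12*t^2+16384*s^12*t-16384*c^2*s^10*t+16384*c^4*s^8*t-16384*c^6*s^6*t-16384*c^10*s^2*t-16384*c^12*t+49152*s^10*t^2-32768*c^2*s^8*t^2+12288*c^4*s^6*t^2-20480*c^6*s^4*t^2-36864*c^8*s^2*t^2-24576*c^10*t^2+1024*c^10*s^2+1024*c^12-49152*s^10*t+32768*c^2*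s^8*t-16384*c^4*s^6*t+10240*c^6*s^4*t+16384*c^8*s^2*t+10240*c^10*t-53248*s^8*t^2+20736*c^2*s^6*t^2+8192*c^6*s^2*t^2+4352*c^8*t^2-2048*c^8*s^2-1024*c^10+53248*s^8*t-20480*c^2*s^6*t+2048*c^4*s^4*t-4096*c^6*s^2*t-2048*c^8*t+24576*s^6*t^2+1024*s^8-4352*c^2*s^4*t^2-1024*c^2*s^6-256*c^4*s^2*t^2+1024*c^4*s^4-256*c^6*t^2+256*c^6*s^2+256*c^8-24576*s^6*t+4224*c^2*s^4*t+128*c^6*t-4352*s^4*t^2-2048*s^6+256*c^2*s^2*t^2+1024*c^2*s^4-256*c^4*s^2+4352*s^4*t-256*c^2*s^2*t+256*s^2*t^2+1280*s^4-240*c^2*s^2+16*c^4-256*s^2*t-256*s^2+16*c^2+16))*u^2 - ((-16384*c^10*s^4*t^2+16384*c^12*s^2*t^2-16384*c^14*t^2+16384*s^12*t^2-16384*c^2*s^10*t^2+16384*c^4*s^8*t^2-16384*c^6*s^6*t^2+49152*c^8*s^4*t^2-32768*c^10*s^2*t^2+49152*c^12*t^2-16384*s^12*t+16384*c^2*s^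10*t-16384*c^4*s^8*t+16384*c^6*s^6*t-16384*c^8*s^4*t+8192*c^10*s^2*t-8192*c^12*t-49152*s^10*t^2+32768*c^2*s^8*t^2-16384*c^4*s^6*t^2-20480*c^6*s^4*t^2+4096*c^8*s^2*t^2-53248*c^10*t^2+49152*s^10*t-32768*c^2*s^8*t+16384*c^4*s^6*t+16384*c^10*t+53248*s^8*t^2-20480*c^2*s^6*t^2+8192*c^4*s^4*t^2+12288*c^6*s^2*t^2+24576*c^8*t^2-1024*c^10-53248*s^8*t+20480*c^2*s^6*t-4096*c^4*s^4*t-6144*c^6*s^2*t-10240*c^8*t-24576*s^6*t^2-1024*s^8+3840*c^2*s^4*t^2+1024*c^2*s^6-3840*c^4*s^2*t^2-1024*c^4*s^4-4352*c^6*t^2+256*c^6*s*t+1024*c^6*s^2+1024*c^8+24576*s^6*t-4096*c^2*s^4*t+2048*c^4*s^2*t+2048*c^6*t+4352*s^4*t^2-256*s^5*t+2048*s^6+256*c^2*s^3*t-1024*c^2*s^4+256*c^4*t^2-512*c^4*s*t-256*c^6-4352*s^4*t+128*s^5+128*c^2*s^2*t-128*c^2*s^3-128*c^4*t+128*c^4*s-256*s^2*t^2+256*s^3*t-1280*s^4+32*c^2*s*t+256*c^2*s^2+256*s^2*t-128*s^3-32*s*t+256*s^2-16*c^2+16*s-16))*u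 - ((4096*c^8*s^4*t^2-4096*c^10*s^2*t^2+4096*c^12*t^2+4096*s^10*t^2-4096*c^2*s^8*t^2+4096*c^4*s^6*t^2-12288*c^6*s^4*t^2+8192*c^8*s^2*t^2-12288*c^10*t^2-4096*s^10*t+4096*c^2*s^8*t-4096*c^4*s^6*t+4096*c^6*s^4*t-2048*c^8*s^2*t+2048*c^10*t-8192*s^8*t^2+4096*c^2*s^6*t^2+5120*c^4*s^4*t^2-1024*c^6*s^2*t^2+13312*c^8*t^2+8192*s^8*t-4096*c^2*s^6*t-4096*c^8*t+5120*s^6*t^2-2048*c^2*s^4*t^2-3072*c^4*s^2*t^2-6144*c^6*t^2+256*c^8-5120*s^6*t+1024*c^2*s^4*t+1536*c^4*s^2*t+2560*c^6*t-960*s^4*t^2+128*s^5*t-256*s^6+960*c^2*s^2*t^2-128*c^2*s^3*t+256*c^2*s^4+1088*c^4*t^2-256*c^4*s^2-256*c^6+1024*s^4*t-512*c^2*s^2*t-512*c^4*t-128*s^3*t+256*s^4-64*c^2*t^2+128*c^2*s*t+64*c^4-32*s^2*t+32*s^3+32*c^2*t-32*c^2*s-64*s^2+4)))*hPy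
      + (2*(((2048*s^11*t^2-2048*s^11*t-6656*s^9*t^2-256*s^8*t^2+6656*s^9*t+7808*s^7*t^2+256*s^8*t+640*s^6*t^2-7808*s^7*t-3840*s^5*t^2-640*s^6*t-128*s^7-496*s^4*t^2+3840*s^5*t+656*s^3*t^2+496*s^4*t+288*s^5+108*s^2*t^2-656*s^3*t+16*s^4-22*s*t^2-108*s^2*t-200*s^3-1*t^2+22*s*t-24*s^2+1*t+40*s+7))*u^2 + ((-2048*s^11*t^2+2048*s^11*t+6656*s^9*t^2+256*s^8*t^2-6656*s^9*t-7808*s^7*t^2-256*s^8*t-640*s^6*t^2+7808*s^7*t+3840*s^5*t^2+640*s^6*t+128*s^7+496*s^4*t^2-3840*s^5*t-656*s^3*t^2-464*s^4*t-288*s^5-108*s^2*t^2+656*s^3*t-32*s^4+22*s*t^2+68*s^2*t+200*s^3+1*t^2-26*s*t+44*s^2+5*t-38*s-10))*u + ((-512*s^9*t^2+512*s^9*t+1152*s^7*t^2+64*s^6*t^2-1152*s^7*t-800*s^5*t^2-64*s^6*t-96*s^4*t^2+800*s^5*t+160*s^3*t^2+80*s^4*t+32*s^5+28*s^2*t^2-160*s^3*t-4*s*t^2-8*s^2*t-40*s^3+1*t^2+6*s*t-8*s^2-4*t+10*s+3))))*hCu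 + (4*(8*c^4-8*c^2+1)*((4*s^3*t-4*s*t+1*s) + u*(-8*c^2*s^3*t-8*c^4*s*t+16*c^2*s*t-4*c^2*s)))*hb
  have hquad : ∀ u : ℝ, ((((-4*c^3*t+4*c*t-1*c) + u*(-8*c*s^4*t+8*c^5*t+8*c*s^2*t-8*c^3*t-2*c*s^2+2*c^3)) - 0)^2 + (((4*s^3*t-4*s*t+1*s) + u*(-8*c^2*s^3*t-8*c^4*s*t+16*c^2*s*t-4*c^2*s)) - ctr 1)^2 = (ctr 1)^2)
      ↔ (16*s^2*t^2+16*s*t^2-16*s^2*t+1*t^2-16*s*t-8*s^2-1*t+2*s+9)*u^2 + (-16*s^2*t^2-16*s*t^2+32*s^2*t-1*t^2+24*s*t-5*t-6*s-6)*u + (12*s^2*t^2+10*s*t^2-20*s^2*t-1*t^2-14*s*t+4*s^2+4*t+4*s+1) = 0 :=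
    fun u => quad_iff_zero _ _ _ _ _ hY2 (hscale u)
  have hXiff : ∀ X : Pt, X ∈ N₀ t ∩ Metric.sphere ctr rad ↔
      ∃ u : ℝ, X = pt ((-4*c^3*t+4*c*t-1*c) + u*(-8*c*s^4*t+8*c^5*t+8*c*s^2*t-8*c^3*t-2*c*s^2+2*c^3)) ((4*s^3*t-4*s*t+1*s) + u*(-8*c^2*s^3*t-8*c^4*s*t+16*c^2*s*t-4*c^2*s)) ∧ (16*s^2*t^2+16*s*t^2-16*s^2*t+1*t^2-16*s*t-8*s^2-1*t+2*s+9)*u^2 + (-16*s^2*t^2-16*s*t^2+32*s^2*t-1*t^2+24*s*t-5*t-6*s-6)*u + (12*s^2*t^2+10*s*t^2-20*s^2*t-1*t^2-14*s*t+4*s^2+4*t+4*s+1) = 0 := by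
    intro X
    constructor
    · rintro ⟨hXN, hXS⟩
      obtain ⟨u, rfl⟩ := (hNmem X).1 hXN
      refine ⟨u, rfl, (hquad u).1 ?_⟩
      have := (mem_sphere_coord _ ctr rad hrad0).1 hXS
      rw [pt0, pt1, ha, hrad2] at this
      exact this
    · rintro ⟨u, rfl, hq⟩
      refine ⟨(hNmem _).2 ⟨u, rfl⟩, (mem_sphere_coord _ ctr rad hrad0).2 ?_⟩
      rw [pt0, pt1, ha, hrad2]
      exact (hquad u).2 hq
  -- line memberships
  have hL0 : F₀ t ∈ L 0 := by
    rw [L, show ((0:ℤ)+1) = (1:ℤ) by decide]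
    exact ⟨t, by rw [F₀]; module⟩
  have hLm3 : F₀ t ∈ L (-3) ↔ (8*c*s^2*t+2*c*s*t-4*c*s^2-1*c*t+2*c*s-1*c) = 0 := by
    rw [L, show ((-3:ℤ)+1) = (-2:ℤ) by decide, mem_lineThrough_iff, hF, hDm3, hDm2]
    simp only [pt0, pt1]
    simp only [hs, hc]
    constructor
    · rintro ⟨r, hr0, hr1⟩
      linear_combination (1 - (8*c^4-8*c^2+1))*hr0 - (0 - (8*c^3*s-4*c*s))*hr1 + (-64*c*s^4*t+32*c^3*s^2*t-32*c^5*t+32*c*s^2*t+32*c^3*t-8*c^3+8*c*s)*hPy + (-16*c*s^3*t+8*c*s*t+2*c*t+2*c)*hCu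
    · intro he
      refine cross_to_param' (8*c^3*s-4*c*s) (8*c^4-8*c^2+1) 0 1 _ _ ?_ ?_
      · linear_combination he + (64*c*s^4*t-32*c^3*s^2*t+32*c^5*t-32*c*s^2*t-32*c^3*t+8*c^3-8*c*s)*hPy + (16*c*s^3*t-8*c*s*t-2*c*t-2*c)*hCu
      · exact hden1
  have hL3 : F₀ t ∈ L 3 ↔ (-8*c*s^2*t-2*c*s*t+4*c*s^2+1*c*t+4*c*s-2*c) = 0 := by
    rw [L, show ((3:ℤ)+1) = (4:ℤ) by decide, mem_lineThrough_iff, hF, hD3, hD4]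
    simp only [pt0, pt1]
    simp only [hs, hc]
    constructor
    · rintro ⟨r, hr0, hr1⟩
      linear_combination ((-(-4*s^3+3*s)) - (-(2*c^2-1)))*hr0 - ((4*c^3-3*c) - (2*c*s))*hr1 + (32*c*s^3*t-8*c*s^2*t+8*c^3*t-28*c*s*t-8*c*s^2+8*c^3-4*c*t+4*c*s)*hPy + (8*c*s^2*t-2*c*t-4*c*s)*hCu
    · intro he
      refine cross_to_param' (2*c*s) (-(2*c^2-1)) (4*c^3-3*c) (-(-4*s^3+3*s)) _ _ ?_ ?_
      · linear_combination he + (-32*c*s^3*t+8*c*s^2*t-8*c^3*t+28*c*s*t+8*c*s^2-8*c^3+4*c*t-4*c*s)*hPy + (-8*c*s^2*t+2*c*t+4*c*s)*hCu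
      · exact hden2
  have hcomp : ∀ u : ℝ, 4*(16*s^2*t^2+16*s*t^2-16*s^2*t+1*t^2-16*s*t-8*s^2-1*t+2*s+9)*((16*s^2*t^2+16*s*t^2-16*s^2*t+1*t^2-16*s*t-8*s^2-1*t+2*s+9)*u^2 + (-16*s^2*t^2-16*s*t^2+32*s^2*t-1*t^2+24*s*t-5*t-6*s-6)*u + (12*s^2*t^2+10*s*t^2-20*s^2*t-1*t^2-14*s*t+4*s^2+4*t+4*s+1))
      = (2*(16*s^2*t^2+16*s*t^2-16*s^2*t+1*t^2-16*s*t-8*s^2-1*t+2*s+9)*u + (-16*s^2*t^2-16*s*t^2+32*s^2*t-1*t^2+24*s*t-5*t-6*s-6))^2 + (-(704/27)*s^2-(32/27)*s+(592/27))*((8*c*s^2*t+2*c*s*t-4*c*s^2-1*c*t+2*c*s-1*c)*(-8*c*s^2*t-2*c*s*t+4*c*s^2+1*c*t+4*c*s-2*c))^2 := by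
    intro u
    linear_combination (-(2883584/27)*s^12*t^4+(2883584/27)*c^2*s^10*t^4-(3014656/27)*s^11*t^4+(5767168/27)*s^12*t^3+(3014656/27)*c^2*s^9*t^4-(5767168/27)*c^2*s^10*t^3+(5537792/27)*s^10*t^4+(6029312/27)*s^11*t^3-(1441792/9)*s^12*t^2-98304*c^2*s^8*t^4-(6029312/27)*c^2*s^9*t^3+(1441792/9)*c^2*s^10*t^2+(6356992/27)*s^9*t^4-(11075584/27)*s^10*t^3-(1507328/9)*s^11*t^2+(1441792/27)*s^12*t-(1114112/9)*c^2*s^7*t^4+196608*c^2*s^8*t^3+(1507328/9)*c^2*s^9*t^2-(1441792/27)*c^2*s^10*t-(975872/9)*s^8*t^4-(12713984/27)*s^9*t^3+(3039232/9)*s^10*t^2+(1507328/27)*s^11*t-(180224/27)*s^12+(91136/9)*c^2*s^6*t^4+(2228224/9)*c^2*s^7*t^3-(532480/3)*c^2*s^8*t^2-(1507328/27)*c^2*s^9*t+(180224/27)*c^2*s^10-(1404416/9)*s^7*t^4+(1951744/9)*s^8*t^3+(3055616/9)*s^9*t^2-(3579904/27)*s^10*t-(188416/27)*s^11+32256*c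^2*s^5*t^4-(182272/9)*c^2*s^6*t^3-172032*c^2*s^7*t^2+(237568/3)*c^2*s^8*t+(188416/27)*c^2*s^9+10496*s^6*t^4+(2808832/9)*s^7*t^3-(695296/3)*s^8*t^2-(2809856/27)*s^9*t+(548864/27)*s^10-(3328/9)*c^2*s^4*t^4-64512*c^2*s^5*t^3+54272*c^2*s^6*t^2+(434176/9)*c^2*s^7*t-(40960/3)*c^2*s^8+(323840/9)*s^5*t^4-20992*s^6*t^3-(602624/3)*s^7*t^2+(1110016/9)*s^8*t+(305152/27)*s^9-(33536/9)*c^2*s^3*t^4+(6656/9)*c^2*s^4*t^3+(86528/3)*c^2*s^5*t^2-(397312/9)*c^2*s^6*t-(38912/9)*c^2*s^7-(5056/9)*s^4*t^4-(647680/9)*s^5*t^3+(201472/3)*s^6*t^2+(403456/9)*s^7*t-(235520/9)*s^8+192*c^2*s^2*t^4+(67072/9)*c^2*s^3*t^3-(38656/3)*c^2*s^4*t^2+(10240/3)*c^2*s^5*t+(112640/9)*c^2*s^6-(105376/27)*s^3*t^4+(10112/9)*s^4*t^3+(81664/3)*s^5*t^2-(169984/3)*s^6*t+(24064/9)*s^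7+(4768/27)*c^2*s*t^4-384*c^2*s^2*t^3+(4864/3)*c^2*s^3*t^2+(112640/9)*c^2*s^4*t-(20992/3)*c^2*s^5+(5776/27)*s^2*t^4+(210752/27)*s^3*t^3-13888*s^4*t^2+(78848/9)*s^5*t+(43264/3)*s^6-(592/27)*c^2*t^4-(9536/27)*c^2*s*t^3+(3008/3)*c^2*s^2*t^2-(48128/9)*c^2*s^3*t-(17152/9)*c^2*s^4+(4768/27)*s*t^4-(11552/27)*s^2*t^3+(19360/9)*s^3*t^2+(119936/9)*s^4*t-(100864/9)*s^5+(1184/27)*c^2*t^3-(4768/9)*c^2*s*t^2-(2432/3)*c^2*s^2*t+(37888/9)*c^2*s^3-(592/27)*t^4-(9536/27)*s*t^3+(8432/9)*s^2*t^2-(163456/27)*s^3*t+(4352/9)*s^4+(592/9)*c^2*t^2+(19072/27)*c^2*s*t-(7168/3)*c^2*s^2+(1184/27)*t^3-(4768/9)*s*t^2-(19520/27)*s^2*t+(94592/27)*s^3-(2368/27)*c^2*t+(19072/27)*c^2*s+(592/9)*t^2+(19072/27)*s*t-(62144/27)*s^2-(2368/27)*c^2-(2368/27)*t+(19072/27)*s-(2368/27))*hPy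 + (-(720896/27)*s^11*t^4-(753664/27)*s^10*t^4+(1441792/27)*s^11*t^3+(1564672/27)*s^9*t^4+(1507328/27)*s^10*t^3-(360448/9)*s^11*t^2+(622592/9)*s^8*t^4-(3129344/27)*s^9*t^3-(376832/9)*s^10*t^2+(360448/27)*s^11*t-(282880/9)*s^7*t^4-(1245184/9)*s^8*t^3+(849920/9)*s^9*t^2+(376832/27)*s^10*t-(45056/27)*s^11-(479104/9)*s^6*t^4+(565760/9)*s^7*t^3+100352*s^8*t^2-(985088/27)*s^9*t-(47104/27)*s^10-(22400/9)*s^5*t^4+(958208/9)*s^6*t^3-66304*s^7*t^2-(280576/9)*s^8*t+(148480/27)*s^9+(36032/3)*s^4*t^4+(44800/9)*s^5*t^3-(214912/3)*s^6*t^2+(313856/9)*s^7*t+(31232/9)*s^8+(18208/9)*s^3*t^4-(72064/3)*s^4*t^3+(37376/3)*s^5*t^2+(165632/9)*s^6*t-(65536/9)*s^7-(17608/27)*s^2*t^4-(36416/9)*s^3*t^3+11584*s^4*t^2-(134528/9)*s^5*t-(2176/9)*s^6+(2212/27)*s*t^4+(35216/27)*s^2*t^3-(5888/3)*s^3*t^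2+(1280/3)*s^4*t+(38272/9)*s^5+(1454/27)*t^4-(4424/27)*s*t^3+(7768/9)*s^2*t^2+(35872/9)*s^3*t-(8224/3)*s^4-(2908/27)*t^3+(6788/9)*s*t^2-(40912/27)*s^2*t-(2384/9)*s^3+(346/9)*t^2-(18152/27)*s*t+(29432/27)*s^2+(416/27)*t-(14048/27)*s+(4736/27))*hCu
  obtain ⟨hiffu, huniq⟩ := quad_core _ _ _ _ _ hApos hnupos hcomp
  have hNE : (N₀ t ∩ Metric.sphere ctr rad).Nonempty ↔ (8*c*s^2*t+2*c*s*t-4*c*s^2-1*c*t+2*c*s-1*c)*(-8*c*s^2*t-2*c*s*t+4*c*s^2+1*c*t+4*c*s-2*c) = 0 := by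
    constructor
    · rintro ⟨X, hX⟩
      obtain ⟨u, -, hq⟩ := (hXiff X).1 hX
      exact hiffu.1 ⟨u, hq⟩
    · intro h0
      obtain ⟨u, hq⟩ := hiffu.2 h0
      exact ⟨_, (hXiff _).2 ⟨u, rfl, hq⟩⟩
  have hexu : (8*c*s^2*t+2*c*s*t-4*c*s^2-1*c*t+2*c*s-1*c)*(-8*c*s^2*t-2*c*s*t+4*c*s^2+1*c*t+4*c*s-2*c) = 0 → ∃! X : Pt, X ∈ N₀ t ∩ Metric.sphere ctr rad := by
    intro h0
    obtain ⟨u, hq⟩ := hiffu.2 h0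
    refine ⟨pt ((-4*c^3*t+4*c*t-1*c) + u*(-8*c*s^4*t+8*c^5*t+8*c*s^2*t-8*c^3*t-2*c*s^2+2*c^3)) ((4*s^3*t-4*s*t+1*s) + u*(-8*c^2*s^3*t-8*c^4*s*t+16*c^2*s*t-4*c^2*s)), (hXiff _).2 ⟨u, rfl, hq⟩, ?_⟩
    intro X hX
    obtain ⟨u', rfl, hq'⟩ := (hXiff X).1 hX
    rw [huniq u' u hq' hq]
  have hmem_iff : (F₀ t ∈ L 0 ∩ L (-3) ∨ F₀ t ∈ L 0 ∩ L 3) ↔ (8*c*s^2*t+2*c*s*t-4*c*s^2-1*c*t+2*c*s-1*c)*(-8*c*s^2*t-2*c*s*t+4*c*s^2+1*c*t+4*c*s-2*c) = 0 := by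
    constructor
    · rintro (⟨-, hm⟩|⟨-, hm⟩)
      · exact mul_eq_zero.2 (Or.inl (hLm3.1 hm))
      · exact mul_eq_zero.2 (Or.inr (hL3.1 hm))
    · intro h0
      rcases mul_eq_zero.1 h0 with h|h
      · exact Or.inl ⟨hL0, hLm3.2 h⟩
      · exact Or.inr ⟨hL0, hL3.2 h⟩
  exact ⟨hNE.trans hmem_iff.symm, fun hm => hexu (hmem_iff.1 hm)⟩
end
end

section
/- Let O ∈ ℝ², let ℓ be a line with O ∉ ℓ, let θ ∈ ℝ be not an integer multiple of 2π, let ℓ' be the image of ℓ under rotation by θ about O, let P ∈ ℓ, and let P' be the image of P under rotation by θ about O (so P ≠ P'). Let O_ℓ, O_{ℓ'} and O_{PP'} be the reflections of O across ℓ, across ℓ', and across the line through P and P', respectively. Then O_ℓ, O_{ℓ'} and O_{PP'} are collinear. -/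
/- STATEMENT 2: Let ℓ be a line not through O, θ not an integer multiple of 2π, ℓ' the
rotate of ℓ by θ about O, P ∈ ℓ and P' its rotate. Then the reflections of O across
ℓ, ℓ' and the line PP' are collinear. -/

open Real

noncomputable section

/-- Euclidean dot product of two vectors of ℝ². -/
def dot (u v : Pt) : ℝ := u 0 * v 0 + u 1 * v 1

/-- `X'` is the reflection of `X` across the line `m`: the midpoint of `X` and `X'`
lies on `m`, and `X' - X` is orthogonal to the direction of `m`. -/
def IsReflection (m : Set Pt) (X X' : Pt) : Prop :=
  midpoint ℝ X X' ∈ m ∧ ∀ A ∈ m, ∀ B ∈ m, dot (X' - X) (B - A) = 0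

lemma pt_rot0 (θ : ℝ) (O p : Pt) :
    rotAbout θ O p 0 = O 0 + Real.cos θ * (p 0 - O 0) - Real.sin θ * (p 1 - O 1) := by
  simp [rotAbout, pt]

lemma pt_rot1 (θ : ℝ) (O p : Pt) :
    rotAbout θ O p 1 = O 1 + Real.sin θ * (p 0 - O 0) + Real.cos θ * (p 1 - O 1) := by
  simp [rotAbout, pt]

lemma mid_coord {x y m : Pt} (h : midpoint ℝ x y = m) (i : Fin 2) : y i = 2 * m i - x i := by
  have e : midpoint ℝ x y i = (x i + y i)/2 := by rw [midpoint_eq_smul_add]; simp; ring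
  rw [h] at e; linarith

lemma sq_sum_zero {x0 x1 : ℝ} (h : x0^2 + x1^2 = 0) : x0 = 0 ∧ x1 = 0 := by
  constructor <;> nlinarith [sq_nonneg x0, sq_nonneg x1]

lemma collinear_of_cross (p q r : Pt)
    (h : (q 0 - p 0) * (r 1 - p 1) = (q 1 - p 1) * (r 0 - p 0)) :
    Collinear ℝ ({p, q, r} : Set Pt) := by
  rw [collinear_iff_exists_forall_eq_smul_vadd]
  refine ⟨p, ?_⟩
  rcases eq_or_ne q p with hq | hq
  · refine ⟨r - p, ?_⟩
    intro x hx
    simp only [Set.mem_insert_iff, Set.mem_singleton_iff] at hx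
    rcases hx with rfl | rfl | rfl
    · exact ⟨0, by simp⟩
    · exact ⟨0, by simp [hq]⟩
    · exact ⟨1, by ext i; simp⟩
  · refine ⟨q - p, ?_⟩
    intro x hx
    simp only [Set.mem_insert_iff, Set.mem_singleton_iff] at hx
    rcases hx with rfl | rfl | rfl
    · exact ⟨0, by simp⟩
    · exact ⟨1, by ext i; simp⟩
    · rcases eq_or_ne (q 0) (p 0) with h0 | h0
      · have h1 : q 1 ≠ p 1 := fun h1 => hq (by ext i; fin_cases i <;> simp [h0, h1])
        have h1' : q 1 - p 1 ≠ 0 := sub_ne_zero.2 h1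
        refine ⟨(x 1 - p 1)/(q 1 - p 1), ?_⟩
        have hr0 : x 0 = p 0 := by
          have h' : (q 1 - p 1) * (x 0 - p 0) = 0 := by
            rw [← h, h0]; ring
          have := (mul_eq_zero.1 h').resolve_left h1'
          linarith [sub_eq_zero.1 this]
        ext i
        fin_cases i
        · simp [h0, hr0]
        · simp
          field_simp
          ring
      · have h0' : q 0 - p 0 ≠ 0 := sub_ne_zero.2 h0
        refine ⟨(x 0 - p 0)/(q 0 - p 0), ?_⟩
        ext i
        fin_cases i
        · simp
          field_simp
          ring
        · simp
          field_simp
          linear_combination h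

/-- Core algebraic fact, in the special position where the rotation center is the
origin and the direction of the first line is `(w, 0)`. -/
lemma keyW (a0 a1 w u c s t1 t2 t3 : ℝ)
    (hcs : s^2 + c^2 = 1) (hc : c ≠ 1) (hw : w ≠ 0)
    (hPO : (a0 + u*w)^2 + a1^2 ≠ 0)
    (hg1 : (2*(a0 + t1*w)) * w = 0)
    (hg2 : (2*(c*(a0 + t2*w) - s*a1)) * (c*w) + (2*(s*(a0 + t2*w) + c*a1)) * (s*w) = 0)
    (hg3 : (2*((a0 + u*w) + t3*((c*(a0 + u*w) - s*a1) - (a0 + u*w)))) * ((c*(a0 + u*w) - s*a1) - (a0 + u*w)) + (2*(a1 + t3*((s*(a0 + u*w) + c*a1) - a1))) * ((s*(a0 + u*w) + c*a1) - a1) = 0) :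
    ((2*(c*(a0 + t2*w) - s*a1)) - (2*(a0 + t1*w))) * ((2*(a1 + t3*((s*(a0 + u*w) + c*a1) - a1))) - (2*a1)) = ((2*(s*(a0 + t2*w) + c*a1)) - (2*a1)) * ((2*((a0 + u*w) + t3*((c*(a0 + u*w) - s*a1) - (a0 + u*w)))) - (2*(a0 + t1*w))) := by
  have hG2r : ((2)*w^2*t2 + (2)*a0*w) = 0 := by
    linear_combination hg2 - (((2)*w^2*t2 + (2)*a0*w)) * hcs
  have hG3r : (((((-2)*w^2*u^2 + (4)*w^2*u^2*t3) + ((2)*w^2*c*u^2 + (-4)*w^2*c*u^2*t3)) + (((-2)*a1^2 + (4)*a1^2*t3) + ((2)*a1^2*c + (-4)*a1^2*c*t3))) + ((((-4)*a0*w*u + (8)*a0*w*u*t3) + ((4)*a0*w*c*u + (-8)*a0*w*c*u*t3)) + (((-2)*a0^2 + (4)*a0^2*t3) + ((2)*a0^2*c + (-4)*a0^2*c*t3)))) = 0 := by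
    linear_combination hg3 - ((((2)*w^2*u^2*t3 + (2)*a1^2*t3) + ((4)*a0*w*u*t3 + (2)*a0^2*t3))) * hcs
  have h4c : (4 : ℝ) - 4*c ≠ 0 := fun h => hc (by linarith)
  have hMne : ((4 - 4*c) * ((a0 + u*w)^2 + a1^2) * (4*w^4)) ≠ 0 :=
    mul_ne_zero (mul_ne_zero h4c hPO) (mul_ne_zero (by norm_num) (pow_ne_zero 4 hw))
  have hM : ((4 - 4*c) * ((a0 + u*w)^2 + a1^2) * (4*w^4)) * (((2*(c*(a0 + t2*w) - s*a1)) - (2*(a0 + t1*w))) * ((2*(a1 + t3*((s*(a0 + u*w) + c*a1) - a1))) - (2*a1)) - ((2*(s*(a0 + t2*w) + c*a1)) - (2*a1)) * ((2*((a0 + u*w) + t3*((c*(a0 + u*w) - s*a1) - (a0 + u*w)))) - (2*(a0 + t1*w)))) = 0 := by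
    linear_combination (((((16)*w^6*s*u*t2 + (-16)*w^6*s*u*t1) + ((16)*a1*w^5*t2 + ((16)*a1*w^5*t1 + (-32)*a1*w^5*u))) + (((-16)*a1*w^5*c*t2 + (-16)*a1*w^5*c*t1) + ((32)*a1*w^5*c*u + ((16)*a0*w^5*s*t2 + (-16)*a0*w^5*s*t1))))) * hG3r + (((((((32)*w^6*s*u^2*t2 + (-16)*w^6*s*u^3) + ((-32)*w^6*c*s*u^2*t2 + (16)*w^6*c*s*u^3)) + (((-32)*a1*w^5*u^2 + (16)*a1*w^5*s^2*u^2) + ((32)*a1*w^5*c*u^2 + (32)*a1^2*w^4*s*t2))) + ((((-16)*a1^2*w^4*s*u + (-32)*a1^2*w^4*c*s*t2) + ((16)*a1^2*w^4*c*s*u + (-32)*a1^3*w^3)) + (((16)*a1^3*w^3*s^2 + (32)*a1^3*w^3*c) + ((64)*a0*w^5*s*u*t2 + (-16)*a0*w^5*s*u^2)))) + (((((-64)*a0*w^5*c*s*u*t2 + (16)*a0*w^5*c*s*u^2) + ((-64)*a0*a1*w^4*u + (32)*a0*a1*w^4*s^2*u)) + (((64)*a0*a1*w^4*c*u + (16)*a0*a1^2*w^3*s)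 + ((-16)*a0*a1^2*w^3*c*s + (32)*a0^2*w^4*s*t2))) + ((((16)*a0^2*w^4*s*u + (-32)*a0^2*w^4*c*s*t2) + ((-16)*a0^2*w^4*c*s*u + (-32)*a0^2*a1*w^3)) + (((16)*a0^2*a1*w^3*s^2 + (32)*a0^2*a1*w^3*c) + ((16)*a0^3*w^3*s + (-16)*a0^3*w^3*c*s)))))) * hg1 + ((((((-16)*w^6*s*u^3 + ((16)*w^6*c*s*u^3 + (32)*a1*w^5*u^2)) + ((-16)*a1*w^5*s^2*u^2 + ((-32)*a1*w^5*c*u^2 + (-16)*a1^2*w^4*s*u))) + (((16)*a1^2*w^4*c*s*u + ((32)*a1^3*w^3 + (-16)*a1^3*w^3*s^2)) + ((-32)*a1^3*w^3*c + ((-48)*a0*w^5*s*u^2 + (48)*a0*w^5*c*s*u^2)))) + ((((64)*a0*a1*w^4*u + ((-32)*a0*a1*w^4*s^2*u + (-64)*a0*a1*w^4*c*u)) + ((-16)*a0*a1^2*w^3*s + ((16)*a0*a1^2*w^3*c*s + (-48)*a0^2*w^4*s*u))) + (((48)*a0^2*w^4*c*s*u + ((32)*a0^2*a1*w^3 + (-16)*a0^2*a1*w^3*s^2))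 + ((-32)*a0^2*a1*w^3*c + ((-16)*a0^3*w^3*s + (16)*a0^3*w^3*c*s)))))) * hG2r + ((((((32)*a1*w^7*u^2*t2 + ((64)*a1*w^7*u^2*t2*t3 + (-32)*a1*w^7*u^2*t1)) + ((-64)*a1*w^7*u^3*t3 + ((-64)*a1*w^7*c*u^2*t2*t3 + (64)*a1*w^7*c*u^3*t3))) + (((32)*a1^3*w^5*t2 + ((64)*a1^3*w^5*t2*t3 + (-32)*a1^3*w^5*t1)) + ((-64)*a1^3*w^5*u*t3 + ((-64)*a1^3*w^5*c*t2*t3 + (64)*a1^3*w^5*c*u*t3)))) + ((((64)*a0*a1*w^6*u*t2 + ((128)*a0*a1*w^6*u*t2*t3 + (-64)*a0*a1*w^6*u*t1)) + ((-128)*a0*a1*w^6*u^2*t3 + ((-128)*a0*a1*w^6*c*u*t2*t3 + (128)*a0*a1*w^6*c*u^2*t3))) + (((32)*a0^2*a1*w^5*t2 + ((64)*a0^2*a1*w^5*t2*t3 + (-32)*a0^2*a1*w^5*t1)) + ((-64)*a0^2*a1*w^5*u*t3 + ((-64)*a0^2*a1*w^5*c*t2*t3 + (64)*a0^2*a1*w^5*c*u*t3))))))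 * hcs
  have h0 := (mul_eq_zero.mp hM).resolve_left hMne
  linear_combination h0

/-- Core algebraic fact with the rotation center at the origin and an arbitrary
line direction, coordinates of the three reflections given parametrically. -/
lemma key0 (a0 a1 b0 b1 u c s t1 t2 t3 p0 p1 X1 Y1 X2 Y2 X3 Y3 : ℝ)
    (hcs : s^2 + c^2 = 1) (hc : c ≠ 1)
    (hAB : (b0 - a0)^2 + (b1 - a1)^2 ≠ 0)
    (hPO : p0^2 + p1^2 ≠ 0)
    (hp0 : p0 = a0 + u * (b0 - a0)) (hp1 : p1 = a1 + u * (b1 - a1))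
    (hx1 : X1 = 2 * (a0 + t1 * (b0 - a0))) (hy1 : Y1 = 2 * (a1 + t1 * (b1 - a1)))
    (hx2 : X2 = 2 * (c * (a0 + t2 * (b0 - a0)) - s * (a1 + t2 * (b1 - a1))))
    (hy2 : Y2 = 2 * (s * (a0 + t2 * (b0 - a0)) + c * (a1 + t2 * (b1 - a1))))
    (hx3 : X3 = 2 * (p0 + t3 * ((c * p0 - s * p1) - p0)))
    (hy3 : Y3 = 2 * (p1 + t3 * ((s * p0 + c * p1) - p1)))
    (hg1 : X1 * (b0 - a0) + Y1 * (b1 - a1) = 0)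
    (hg2 : X2 * ((c * b0 - s * b1) - (c * a0 - s * a1)) +
           Y2 * ((s * b0 + c * b1) - (s * a0 + c * a1)) = 0)
    (hg3 : X3 * ((c * p0 - s * p1) - p0) + Y3 * ((s * p0 + c * p1) - p1) = 0) :
    (X2 - X1) * (Y3 - Y1) = (Y2 - Y1) * (X3 - X1) := by
  subst hx1 hy1 hx2 hy2 hx3 hy3
  subst hp0 hp1
  have hW := keyW ((b0-a0)*a0 + (b1-a1)*a1) (-(b1-a1)*a0 + (b0-a0)*a1) ((b0-a0)^2 + (b1-a1)^2) u c s t1 t2 t3 hcs hc hAB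
    (by
      intro hz
      have hz2 : ((b0-a0)^2 + (b1-a1)^2) * ((a0 + u*(b0-a0))^2 + (a1 + u*(b1-a1))^2) = 0 := by linear_combination hz
      exact hPO ((mul_eq_zero.mp hz2).resolve_left hAB))
    (by linear_combination ((b0-a0)^2 + (b1-a1)^2) * hg1)
    (by linear_combination ((b0-a0)^2 + (b1-a1)^2) * hg2)
    (by linear_combination ((b0-a0)^2 + (b1-a1)^2) * hg3)
  have h2 : ((b0-a0)^2 + (b1-a1)^2) * ((((2*(c*(a0 + t2*(b0-a0)) - s*(a1 + t2*(b1-a1)))) - (2*(a0 + t1*(b0-a0)))) * ((2*((a1 + u*(b1-a1)) + t3*((s*(a0 + u*(b0-a0)) + c*(a1 + u*(b1-a1))) - (a1 + u*(b1-a1))))) - (2*(a1 + t1*(b1-a1))))) - (((2*(s*(a0 + t2*(b0-a0)) + c*(a1 + t2*(b1-a1)))) - (2*(a1 + t1*(b1-a1)))) * ((2*((a0 + u*(b0-a0)) + t3*((c*(a0 + u*(b0-a0)) - s*(a1 + u*(b1-a1))) - (a0 + u*(b0-a0))))) - (2*(a0 + t1*(b0-a0)))))) = 0 := by linear_combination 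hW
  have h0 := (mul_eq_zero.mp h2).resolve_left hAB
  linear_combination h0

set_option maxHeartbeats 4000000 in
theorem reflections_collinear
    (O A B : Pt) (hAB : A ≠ B) (hO : O ∉ lineThrough A B)
    (θ : ℝ) (hθ : ∀ n : ℤ, θ ≠ n * (2 * π))
    (P : Pt) (hP : P ∈ lineThrough A B)
    (Oℓ Oℓ' OPP' : Pt)
    (h1 : IsReflection (lineThrough A B) O Oℓ)
    (h2 : IsReflection (rotAbout θ O '' lineThrough A B) O Oℓ')
    (h3 : IsReflection (lineThrough P (rotAbout θ O P)) O OPP') :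
    Collinear ℝ ({Oℓ, Oℓ', OPP'} : Set Pt) := by
  obtain ⟨u, hu⟩ := hP
  have hp0 : P 0 = A 0 + u * (B 0 - A 0) := by rw [hu]; simp
  have hp1 : P 1 = A 1 + u * (B 1 - A 1) := by rw [hu]; simp
  have memA : A ∈ lineThrough A B := ⟨0, by simp⟩
  have memB : B ∈ lineThrough A B := ⟨1, by simp⟩
  have memP : P ∈ lineThrough P (rotAbout θ O P) := ⟨0, by simp⟩
  have memP' : rotAbout θ O P ∈ lineThrough P (rotAbout θ O P) := ⟨1, by simp⟩
  have memA' : rotAbout θ O A ∈ rotAbout θ O '' lineThrough A B := ⟨A, memA, rfl⟩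
  have memB' : rotAbout θ O B ∈ rotAbout θ O '' lineThrough A B := ⟨B, memB, rfl⟩
  -- line 1 data
  obtain ⟨t1, ht1⟩ := h1.1
  have hx1 : Oℓ 0 = 2 * (A 0 + t1 * (B 0 - A 0)) - O 0 := by
    have := mid_coord ht1 0; simpa using this
  have hy1 : Oℓ 1 = 2 * (A 1 + t1 * (B 1 - A 1)) - O 1 := by
    have := mid_coord ht1 1; simpa using this
  have hg1 := h1.2 A memA B memB
  simp only [dot, PiLp.sub_apply] at hg1
  -- line 2 data
  obtain ⟨Q, hQmem, hQeq⟩ := h2.1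
  obtain ⟨t2, ht2⟩ := hQmem
  have hq0 : Q 0 = A 0 + t2 * (B 0 - A 0) := by rw [ht2]; simp
  have hq1 : Q 1 = A 1 + t2 * (B 1 - A 1) := by rw [ht2]; simp
  have hx2 : Oℓ' 0 = 2 * (O 0 + Real.cos θ * (A 0 + t2 * (B 0 - A 0) - O 0)
      - Real.sin θ * (A 1 + t2 * (B 1 - A 1) - O 1)) - O 0 := by
    have := mid_coord hQeq.symm 0
    rw [pt_rot0, hq0, hq1] at this
    exact this
  have hy2 : Oℓ' 1 = 2 * (O 1 + Real.sin θ * (A 0 + t2 * (B 0 - A 0) - O 0)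
      + Real.cos θ * (A 1 + t2 * (B 1 - A 1) - O 1)) - O 1 := by
    have := mid_coord hQeq.symm 1
    rw [pt_rot1, hq0, hq1] at this
    exact this
  have hg2 := h2.2 (rotAbout θ O A) memA' (rotAbout θ O B) memB'
  simp only [dot, PiLp.sub_apply, pt_rot0, pt_rot1] at hg2
  -- line 3 data
  obtain ⟨t3, ht3⟩ := h3.1
  have hx3 : OPP' 0 = 2 * (P 0 + t3 * ((O 0 + Real.cos θ * (P 0 - O 0)
      - Real.sin θ * (P 1 - O 1)) - P 0)) - O 0 := by
    have := mid_coord ht3 0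
    simp only [PiLp.add_apply, PiLp.smul_apply, PiLp.sub_apply, smul_eq_mul, pt_rot0] at this
    exact this
  have hy3 : OPP' 1 = 2 * (P 1 + t3 * ((O 1 + Real.sin θ * (P 0 - O 0)
      + Real.cos θ * (P 1 - O 1)) - P 1)) - O 1 := by
    have := mid_coord ht3 1
    simp only [PiLp.add_apply, PiLp.smul_apply, PiLp.sub_apply, smul_eq_mul, pt_rot1] at this
    exact this
  have hg3 := h3.2 P memP (rotAbout θ O P) memP'
  simp only [dot, PiLp.sub_apply, pt_rot0, pt_rot1] at hg3
  -- nondegeneracy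
  have hcs : Real.sin θ ^ 2 + Real.cos θ ^ 2 = 1 := Real.sin_sq_add_cos_sq θ
  have hcne : Real.cos θ ≠ 1 := by
    intro hcc
    rw [Real.cos_eq_one_iff] at hcc
    obtain ⟨n, hn⟩ := hcc
    exact hθ n hn.symm
  have hABne : ((B 0 - O 0) - (A 0 - O 0))^2 + ((B 1 - O 1) - (A 1 - O 1))^2 ≠ 0 := by
    intro hz
    apply hAB
    obtain ⟨e0, e1⟩ := sq_sum_zero hz
    have f0 : A 0 = B 0 := by linear_combination -e0
    have f1 : A 1 = B 1 := by linear_combination -e1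
    ext i
    fin_cases i <;> assumption
  have hPOne : (P 0 - O 0)^2 + (P 1 - O 1)^2 ≠ 0 := by
    intro hz
    apply hO
    obtain ⟨e0, e1⟩ := sq_sum_zero hz
    have f0 : P 0 = O 0 := by linear_combination e0
    have f1 : P 1 = O 1 := by linear_combination e1
    have hPO : P = O := by ext i; fin_cases i <;> assumption
    rw [← hPO]
    exact ⟨u, hu⟩
  -- apply the scalar lemma
  have key := key0 (A 0 - O 0) (A 1 - O 1) (B 0 - O 0) (B 1 - O 1) u
      (Real.cos θ) (Real.sin θ) t1 t2 t3 (P 0 - O 0) (P 1 - O 1)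
      (Oℓ 0 - O 0) (Oℓ 1 - O 1) (Oℓ' 0 - O 0) (Oℓ' 1 - O 1) (OPP' 0 - O 0) (OPP' 1 - O 1)
      hcs hcne hABne hPOne
      (by linear_combination hp0) (by linear_combination hp1)
      (by linear_combination hx1) (by linear_combination hy1)
      (by linear_combination hx2) (by linear_combination hy2)
      (by linear_combination hx3) (by linear_combination hy3)
      (by linear_combination hg1) (by linear_combination hg2) (by linear_combination hg3)
  exact collinear_of_cross Oℓ Oℓ' OPP' (by linear_combination key)
end
end

section
/- Let O ∈ ℝ², let ℓ be a line with O ∉ ℓ, let θ ∈ ℝ be not an integer multiple of π, and let ℓ' be the image of ℓ under rotation by θ about O. Let O_ℓ and O_{ℓ'} be the reflections of O across ℓ and across ℓ', and let d be the line through O_ℓ and O_{ℓ'}. Let M_ℓ and M_{ℓ'} be the feet of the perpendiculars from O to ℓ and to ℓ' respectively, and let V be the midpoint of M_ℓ and M_{ℓ'}. Then the line through M_ℓ and M_{ℓ'} meets the parabola {X ∈ ℝ² : dist(X, O) = dist(X, d)} in exactly one point, namely V (the vertex of the parabola). -/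
/- STATEMENT 4: With ℓ a line not through O, θ not a multiple of π, ℓ' the rotate of ℓ
by θ about O, O_ℓ, O_ℓ' the reflections of O across ℓ, ℓ', d the line through them,
M_ℓ, M_ℓ' the feet of the perpendiculars from O to ℓ, ℓ', and V the midpoint of
M_ℓ and M_ℓ': the line through M_ℓ and M_ℓ' meets the parabola
{X : dist(X,O) = dist(X,d)} exactly in the single point V (the vertex). -/

open Real

noncomputable section

/-- `M` is the foot of the perpendicular from `X` to the line `m`. -/
def IsFoot (m : Set Pt) (X M : Pt) : Prop :=
  M ∈ m ∧ ∀ A ∈ m, ∀ B ∈ m, dot (X - M) (B - A) = 0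

-- auxiliary lemmas

lemma pt_ext {p q : Pt} (h0 : p 0 = q 0) (h1 : p 1 = q 1) : p = q := by
  ext i; fin_cases i <;> assumption

lemma rot_apply0 (θ : ℝ) (c p : Pt) :
    rotAbout θ c p 0 = c 0 + Real.cos θ * (p 0 - c 0) - Real.sin θ * (p 1 - c 1) := rfl

lemma rot_apply1 (θ : ℝ) (c p : Pt) :
    rotAbout θ c p 1 = c 1 + Real.sin θ * (p 0 - c 0) + Real.cos θ * (p 1 - c 1) := rfl

lemma mid_apply (x y : Pt) (i : Fin 2) : midpoint ℝ x y i = (x i + y i) / 2 := by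
  simp [midpoint_eq_smul_add]; ring

lemma mem_line_coords {A B X : Pt} (h : X ∈ lineThrough A B) :
    ∃ t : ℝ, X 0 = A 0 + t * (B 0 - A 0) ∧ X 1 = A 1 + t * (B 1 - A 1) := by
  obtain ⟨t, rfl⟩ := h
  exact ⟨t, by simp, by simp⟩

lemma mem_line_of_coords {A B X : Pt} (t : ℝ)
    (h0 : X 0 = A 0 + t * (B 0 - A 0)) (h1 : X 1 = A 1 + t * (B 1 - A 1)) :
    X ∈ lineThrough A B :=
  ⟨t, pt_ext (by simpa using h0) (by simpa using h1)⟩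

lemma dist_eq' (x y : Pt) : dist x y = Real.sqrt ((x 0 - y 0) ^ 2 + (x 1 - y 1) ^ 2) := by
  rw [EuclideanSpace.dist_eq]
  simp [Fin.sum_univ_two, Real.dist_eq, sq_abs]

lemma infDist_line {P Q X F : Pt} (hF : F ∈ lineThrough P Q)
    (hperp : (X 0 - F 0) * (Q 0 - P 0) + (X 1 - F 1) * (Q 1 - P 1) = 0) :
    Metric.infDist X (lineThrough P Q) = dist X F := by
  refine le_antisymm (Metric.infDist_le_dist_of_mem hF) ?_
  rw [Metric.infDist_eq_iInf]
  have hne : Nonempty (lineThrough P Q) :=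
    ⟨⟨P, mem_line_of_coords 0 (by ring) (by ring)⟩⟩
  refine le_ciInf fun y => ?_
  obtain ⟨Y, hY⟩ := y
  obtain ⟨t, ht0, ht1⟩ := mem_line_coords hF
  obtain ⟨s, hs0, hs1⟩ := mem_line_coords hY
  simp only
  rw [dist_eq', dist_eq']
  apply Real.sqrt_le_sqrt
  have e0 : X 0 - Y 0 = (X 0 - F 0) + (t - s) * (Q 0 - P 0) := by
    linear_combination ht0 - hs0
  have e1 : X 1 - Y 1 = (X 1 - F 1) + (t - s) * (Q 1 - P 1) := by
    linear_combination ht1 - hs1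
  have hcross : (t - s) * ((X 0 - F 0) * (Q 0 - P 0) + (X 1 - F 1) * (Q 1 - P 1)) = 0 := by
    rw [hperp]; ring
  rw [e0, e1]
  nlinarith [sq_nonneg ((t - s) * (Q 0 - P 0)), sq_nonneg ((t - s) * (Q 1 - P 1)), hcross]

lemma refl_eq {A B O Oℓ Mℓ : Pt} (hu : 0 < (B 0 - A 0) ^ 2 + (B 1 - A 1) ^ 2)
    (h1 : IsReflection (lineThrough A B) O Oℓ) (hM : IsFoot (lineThrough A B) O Mℓ) :
    Oℓ 0 = 2 * Mℓ 0 - O 0 ∧ Oℓ 1 = 2 * Mℓ 1 - O 1 := by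
  have hA : A ∈ lineThrough A B := mem_line_of_coords 0 (by ring) (by ring)
  have hB : B ∈ lineThrough A B := mem_line_of_coords 1 (by ring) (by ring)
  have hp1 : (Oℓ 0 - O 0) * (B 0 - A 0) + (Oℓ 1 - O 1) * (B 1 - A 1) = 0 := by
    simpa [dot] using h1.2 A hA B hB
  have hp2 : (O 0 - Mℓ 0) * (B 0 - A 0) + (O 1 - Mℓ 1) * (B 1 - A 1) = 0 := by
    simpa [dot] using hM.2 A hA B hB
  obtain ⟨t₁, hm0, hm1⟩ := mem_line_coords h1.1
  rw [mid_apply] at hm0 hm1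
  obtain ⟨t₂, hM0, hM1⟩ := mem_line_coords hM.1
  have ht : (t₁ - t₂) * ((B 0 - A 0) ^ 2 + (B 1 - A 1) ^ 2) = 0 := by
    linear_combination -(B 0 - A 0) * hm0 + (B 0 - A 0) * hM0 - (B 1 - A 1) * hm1
      + (B 1 - A 1) * hM1 + (1/2 : ℝ) * hp1 + hp2
  have htt : t₁ = t₂ := by
    rcases mul_eq_zero.mp ht with h | h
    · linarith
    · exact absurd h hu.ne'
  constructor
  · linear_combination 2 * hm0 - 2 * hM0 + 2 * (B 0 - A 0) * htt
  · linear_combination 2 * hm1 - 2 * hM1 + 2 * (B 1 - A 1) * htt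

lemma foot_unique {A B O M M' : Pt} (hu : 0 < (B 0 - A 0) ^ 2 + (B 1 - A 1) ^ 2)
    (h : IsFoot (lineThrough A B) O M) (h' : IsFoot (lineThrough A B) O M') : M = M' := by
  have hA : A ∈ lineThrough A B := mem_line_of_coords 0 (by ring) (by ring)
  have hB : B ∈ lineThrough A B := mem_line_of_coords 1 (by ring) (by ring)
  have hp : (O 0 - M 0) * (B 0 - A 0) + (O 1 - M 1) * (B 1 - A 1) = 0 := by
    simpa [dot] using h.2 A hA B hB
  have hp' : (O 0 - M' 0) * (B 0 - A 0) + (O 1 - M' 1) * (B 1 - A 1) = 0 := by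
    simpa [dot] using h'.2 A hA B hB
  obtain ⟨t, h0, h1⟩ := mem_line_coords h.1
  obtain ⟨t', h0', h1'⟩ := mem_line_coords h'.1
  have ht : (t - t') * ((B 0 - A 0) ^ 2 + (B 1 - A 1) ^ 2) = 0 := by
    linear_combination -(B 0 - A 0) * h0 + (B 0 - A 0) * h0' - (B 1 - A 1) * h1
      + (B 1 - A 1) * h1' - hp + hp'
  have htt : t = t' := by
    rcases mul_eq_zero.mp ht with hh | hh
    · linarith
    · exact absurd hh hu.ne'
  apply pt_ext
  · linear_combination h0 - h0' + (B 0 - A 0) * htt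
  · linear_combination h1 - h1' + (B 1 - A 1) * htt

lemma rot_line (θ : ℝ) (O A B : Pt) :
    rotAbout θ O '' lineThrough A B = lineThrough (rotAbout θ O A) (rotAbout θ O B) := by
  have key : ∀ t : ℝ, rotAbout θ O (A + t • (B - A))
      = rotAbout θ O A + t • (rotAbout θ O B - rotAbout θ O A) := by
    intro t
    apply pt_ext <;>
      simp only [rot_apply0, rot_apply1, PiLp.add_apply, PiLp.smul_apply, PiLp.sub_apply,
        smul_eq_mul] <;> ring
  ext P
  simp only [Set.mem_image, lineThrough, Set.mem_setOf_eq]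
  constructor
  · rintro ⟨Q, ⟨t, rfl⟩, rfl⟩
    exact ⟨t, key t⟩
  · rintro ⟨t, rfl⟩
    exact ⟨A + t • (B - A), ⟨t, rfl⟩, key t⟩

set_option maxHeartbeats 2000000 in
theorem vertex_of_parabola
    (O A B : Pt) (hAB : A ≠ B) (hO : O ∉ lineThrough A B)
    (θ : ℝ) (hθ : ∀ n : ℤ, θ ≠ n * π)
    (Oℓ Oℓ' : Pt)
    (h1 : IsReflection (lineThrough A B) O Oℓ)
    (h2 : IsReflection (rotAbout θ O '' lineThrough A B) O Oℓ')
    (Mℓ Mℓ' : Pt)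
    (hM1 : IsFoot (lineThrough A B) O Mℓ)
    (hM2 : IsFoot (rotAbout θ O '' lineThrough A B) O Mℓ') :
    lineThrough Mℓ Mℓ' ∩
        {X : Pt | dist X O = Metric.infDist X (lineThrough Oℓ Oℓ')} =
      {midpoint ℝ Mℓ Mℓ'} := by
  have hpy := Real.sin_sq_add_cos_sq θ
  -- the direction of ℓ is nonzero
  have hABu : 0 < (B 0 - A 0) ^ 2 + (B 1 - A 1) ^ 2 := by
    by_contra hc
    push_neg at hc
    have h0 : B 0 - A 0 = 0 := by nlinarith [sq_nonneg (B 0 - A 0), sq_nonneg (B 1 - A 1)]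
    have h1' : B 1 - A 1 = 0 := by nlinarith [sq_nonneg (B 0 - A 0), sq_nonneg (B 1 - A 1)]
    exact hAB (pt_ext (by linarith) (by linarith))
  -- rewrite the image line
  rw [rot_line θ O A B] at h2 hM2
  have hu' : 0 < (rotAbout θ O B 0 - rotAbout θ O A 0) ^ 2
      + (rotAbout θ O B 1 - rotAbout θ O A 1) ^ 2 := by
    have : (rotAbout θ O B 0 - rotAbout θ O A 0) ^ 2
        + (rotAbout θ O B 1 - rotAbout θ O A 1) ^ 2
        = (B 0 - A 0) ^ 2 + (B 1 - A 1) ^ 2 := by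
      simp only [rot_apply0, rot_apply1]
      linear_combination ((B 0 - A 0) ^ 2 + (B 1 - A 1) ^ 2) * hpy
    linarith
  obtain ⟨e1, e2⟩ := refl_eq hABu h1 hM1
  obtain ⟨f1, f2⟩ := refl_eq hu' h2 hM2
  -- the rotation of Mℓ is the foot on the rotated line
  have hfoot : IsFoot (lineThrough (rotAbout θ O A) (rotAbout θ O B)) O (rotAbout θ O Mℓ) := by
    obtain ⟨t, g0, g1⟩ := mem_line_coords hM1.1
    have hp2 : (O 0 - Mℓ 0) * (B 0 - A 0) + (O 1 - Mℓ 1) * (B 1 - A 1) = 0 := by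
      simpa [dot] using hM1.2 A (mem_line_of_coords 0 (by ring) (by ring))
        B (mem_line_of_coords 1 (by ring) (by ring))
    constructor
    · apply mem_line_of_coords t
      · simp only [rot_apply0]
        linear_combination Real.cos θ * g0 - Real.sin θ * g1
      · simp only [rot_apply1]
        linear_combination Real.sin θ * g0 + Real.cos θ * g1
    · intro P hP Q hQ
      obtain ⟨s, hs0, hs1⟩ := mem_line_coords hP
      obtain ⟨r, hr0, hr1⟩ := mem_line_coords hQ
      have hq0 : Q 0 - P 0 = (r - s) * (rotAbout θ O B 0 - rotAbout θ O A 0) := by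
        linear_combination hr0 - hs0
      have hq1 : Q 1 - P 1 = (r - s) * (rotAbout θ O B 1 - rotAbout θ O A 1) := by
        linear_combination hr1 - hs1
      show dot _ _ = 0
      simp only [dot, PiLp.sub_apply]
      rw [hq0, hq1]
      simp only [rot_apply0, rot_apply1]
      linear_combination (r - s) * hp2 + (r - s) *
        ((O 0 - Mℓ 0) * (B 0 - A 0) + (O 1 - Mℓ 1) * (B 1 - A 1)) * hpy
  have hMM : Mℓ' = rotAbout θ O Mℓ := foot_unique hu' hM2 hfoot
  -- key: Mℓ' is at the same distance from O as Mℓ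
  have keyEq : (Mℓ' 0 - O 0) ^ 2 + (Mℓ' 1 - O 1) ^ 2
      = (Mℓ 0 - O 0) ^ 2 + (Mℓ 1 - O 1) ^ 2 := by
    rw [hMM]
    simp only [rot_apply0, rot_apply1]
    linear_combination ((Mℓ 0 - O 0) ^ 2 + (Mℓ 1 - O 1) ^ 2) * hpy
  -- distance from any point of the line MℓMℓ' to the directrix
  have hline_dist : ∀ X ∈ lineThrough Mℓ Mℓ',
      Metric.infDist X (lineThrough Oℓ Oℓ')
        = Real.sqrt (((Mℓ 0 + Mℓ' 0) / 2 - O 0) ^ 2 + ((Mℓ 1 + Mℓ' 1) / 2 - O 1) ^ 2) := by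
    intro X hX
    obtain ⟨t, h0, h1'⟩ := mem_line_coords hX
    set F : Pt := pt (X 0 + ((Mℓ 0 + Mℓ' 0) / 2 - O 0)) (X 1 + ((Mℓ 1 + Mℓ' 1) / 2 - O 1))
      with hFdef
    have Fc0 : F 0 = X 0 + ((Mℓ 0 + Mℓ' 0) / 2 - O 0) := rfl
    have Fc1 : F 1 = X 1 + ((Mℓ 1 + Mℓ' 1) / 2 - O 1) := rfl
    have hF : F ∈ lineThrough Oℓ Oℓ' := by
      apply mem_line_of_coords (t / 2 + 1 / 4)
      · rw [Fc0, e1, f1, h0]; ring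
      · rw [Fc1, e2, f2, h1']; ring
    have hperp : (X 0 - F 0) * (Oℓ' 0 - Oℓ 0) + (X 1 - F 1) * (Oℓ' 1 - Oℓ 1) = 0 := by
      rw [Fc0, Fc1, e1, e2, f1, f2]
      linear_combination -keyEq
    rw [infDist_line hF hperp, dist_eq', Fc0, Fc1]
    congr 1
    ring
  ext X
  simp only [Set.mem_inter_iff, Set.mem_setOf_eq, Set.mem_singleton_iff]
  constructor
  · rintro ⟨hX, hdist⟩
    rw [hline_dist X hX, dist_eq'] at hdist
    obtain ⟨t, h0, h1'⟩ := mem_line_coords hX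
    have hL : 0 ≤ (X 0 - O 0) ^ 2 + (X 1 - O 1) ^ 2 := by positivity
    have hR : 0 ≤ ((Mℓ 0 + Mℓ' 0) / 2 - O 0) ^ 2 + ((Mℓ 1 + Mℓ' 1) / 2 - O 1) ^ 2 := by
      positivity
    have hsq : (X 0 - O 0) ^ 2 + (X 1 - O 1) ^ 2
        = ((Mℓ 0 + Mℓ' 0) / 2 - O 0) ^ 2 + ((Mℓ 1 + Mℓ' 1) / 2 - O 1) ^ 2 := by
      rw [← Real.sq_sqrt hL, ← Real.sq_sqrt hR, hdist]
    rw [h0, h1'] at hsq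
    have hzero : (t - 1/2) ^ 2 * ((Mℓ' 0 - Mℓ 0) ^ 2 + (Mℓ' 1 - Mℓ 1) ^ 2) = 0 := by
      linear_combination hsq + (1/2 - t) * keyEq
    have c0 : (t - 1/2) * (Mℓ' 0 - Mℓ 0) = 0 := by
      have : ((t - 1/2) * (Mℓ' 0 - Mℓ 0)) ^ 2 = 0 := by
        nlinarith [sq_nonneg ((t - 1/2) * (Mℓ' 1 - Mℓ 1))]
      exact pow_eq_zero_iff (two_ne_zero) |>.mp this
    have c1 : (t - 1/2) * (Mℓ' 1 - Mℓ 1) = 0 := by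
      have : ((t - 1/2) * (Mℓ' 1 - Mℓ 1)) ^ 2 = 0 := by
        nlinarith [sq_nonneg ((t - 1/2) * (Mℓ' 0 - Mℓ 0))]
      exact pow_eq_zero_iff (two_ne_zero) |>.mp this
    apply pt_ext
    · rw [mid_apply]
      linear_combination h0 + c0
    · rw [mid_apply]
      linear_combination h1' + c1
  · rintro rfl
    have hVmem : midpoint ℝ Mℓ Mℓ' ∈ lineThrough Mℓ Mℓ' := by
      apply mem_line_of_coords (1/2) <;> rw [mid_apply] <;> ring
    refine ⟨hVmem, ?_⟩
    rw [hline_dist _ hVmem, dist_eq', mid_apply, mid_apply]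
end
end

section
/- There exists a geometric realization (p, L) of the Gray configuration in the plane together with a point c ∈ ℝ² such that the counterclockwise rotation ρ by 2π/3 about c satisfies ρ(p(v)) = p(v + (1,1,1)) for every v ∈ (ℤ/3ℤ)³, and ρ maps the line L(ℓ) onto the line L(ℓ + (1,1,1)) for every combinatorial line ℓ. (This is the polycyclic realization of the Gray configuration with ℤ₃ rotational symmetry whose reduced Levi graph is the Pappus graph.) -/
/- STATEMENT 5: There is a geometric realization (p, L) of the Gray configuration and a
center c such that the rotation ρ by 2π/3 about c satisfies ρ(p(v)) = p(v + (1,1,1)) for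
all points v, and ρ maps the line L(ℓ) onto L(ℓ + (1,1,1)) for every combinatorial line ℓ. -/

open Real

noncomputable section

/-- A subset of the plane is an affine line iff it is the line through two distinct points. -/
def IsAffineLine (S : Set Pt) : Prop := ∃ A B : Pt, A ≠ B ∧ S = lineThrough A B

/-- Points of the Gray configuration: elements of (ℤ/3ℤ)³. -/
abbrev GPt := Fin 3 → ZMod 3

/-- The combinatorial line through `v` in coordinate direction `k`. -/
def grayLine (v : GPt) (k : Fin 3) : Set GPt :=
  {w | ∃ t : ZMod 3, w = v + t • (Pi.single k 1 : GPt)}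

/-- The combinatorial lines of the Gray configuration. -/
def IsGrayLine (ℓ : Set GPt) : Prop := ∃ v k, ℓ = grayLine v k

/-- The type of combinatorial lines of the Gray configuration. -/
abbrev GrayLine := {ℓ : Set GPt // IsGrayLine ℓ}

namespace GrayAux

/-! ### Integer coordinate tables -/

def tA : Fin 3 → Fin 3 → Fin 3 → ℤ := ![![![820, -320, -92], ![130, -380, -2420], ![268, -620, 490]],
  ![![-245, -272, -380], ![304, -920, 610], ![2500, -110, 412]],
  ![![-32, -80, -20], ![1000, -245, 4], ![-290, -212, 100]]]

def tB : Fin 3 → Fin 3 → Fin 3 → ℤ := ![![![340, -300, -172], ![30, -148, -860], ![92, 460, 0]],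
  ![![245, 88, -540], ![40, 240, -10], ![-780, 50, -116]],
  ![![264, 1640, -80], ![80, -245, -180], ![310, 132, -580]]]

def iA (v : GPt) : ℤ := tA (v 0) (v 1) (v 2)
def iB (v : GPt) : ℤ := tB (v 0) (v 1) (v 2)

abbrev e (k : Fin 3) : GPt := Pi.single k 1
abbrev o : GPt := ![1, 1, 1]

def s3 : ℝ := Real.sqrt 3

def pmap (v : GPt) : Pt := pt (iA v) (iB v * s3)

def icross (v : GPt) (k : Fin 3) (w : GPt) : ℤ :=
  (iA w - iA v) * (iB (v + e k) - iB v) - (iB w - iB v) * (iA (v + e k) - iA v)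

/-! ### Decidable integer facts, in coordinate form -/

lemma gpt_eta (v : GPt) : v = ![v 0, v 1, v 2] := by
  funext i
  fin_cases i <;> rfl

set_option maxHeartbeats 2000000 in
lemma D0' : ∀ a b c d e' f : ZMod 3,
    iA ![a,b,c] = iA ![d,e',f] → iB ![a,b,c] = iB ![d,e',f] →
    (![a,b,c] : GPt) = ![d,e',f] := by decide

set_option maxHeartbeats 2000000 in
lemma D2' : ∀ (a b c : ZMod 3) (k : Fin 3) (t : ZMod 3),
    icross ![a,b,c] k (![a,b,c] + t • e k) = 0 := by decide

set_option maxHeartbeats 6000000 in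
lemma D3' : ∀ (a b c : ZMod 3) (k : Fin 3) (d e' f : ZMod 3),
    icross ![a,b,c] k ![d,e',f] = 0 → ∃ t : ZMod 3, (![d,e',f] : GPt) = ![a,b,c] + t • e k := by
  decide

set_option maxHeartbeats 2000000 in
lemma D4' : ∀ a b c : ZMod 3,
    2 * iA (![a,b,c] + o) = -(iA ![a,b,c] + 3 * iB ![a,b,c]) ∧
    2 * iB (![a,b,c] + o) = iA ![a,b,c] - iB ![a,b,c] := by decide

set_option maxHeartbeats 2000000 in
lemma D5' : ∀ (a b c : ZMod 3) (k : Fin 3), (![a,b,c] : GPt) ≠ ![a,b,c] + e k := by decide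

set_option maxHeartbeats 2000000 in
lemma D6' : ∀ (a b c : ZMod 3) (k : Fin 3),
    (![a,b,c] : GPt) = ![a,b,c] + (0 : ZMod 3) • e k ∧
    (![a,b,c] : GPt) + e k = ![a,b,c] + (1 : ZMod 3) • e k := by decide

lemma D0 (v w : GPt) : iA v = iA w → iB v = iB w → v = w := by
  have h := D0' (v 0) (v 1) (v 2) (w 0) (w 1) (w 2)
  rwa [← gpt_eta v, ← gpt_eta w] at h

lemma D2 (v : GPt) (k : Fin 3) (t : ZMod 3) : icross v k (v + t • e k) = 0 := by
  have h := D2' (v 0) (v 1) (v 2) k t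
  rwa [← gpt_eta v] at h

lemma D3 (v : GPt) (k : Fin 3) (w : GPt) :
    icross v k w = 0 → ∃ t : ZMod 3, w = v + t • e k := by
  have h := D3' (v 0) (v 1) (v 2) k (w 0) (w 1) (w 2)
  rwa [← gpt_eta v, ← gpt_eta w] at h

lemma D4 (v : GPt) :
    2 * iA (v + o) = -(iA v + 3 * iB v) ∧ 2 * iB (v + o) = iA v - iB v := by
  have h := D4' (v 0) (v 1) (v 2)
  rwa [← gpt_eta v] at h

lemma D5 (v : GPt) (k : Fin 3) : v ≠ v + e k := by
  have h := D5' (v 0) (v 1) (v 2) k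
  rwa [← gpt_eta v] at h

lemma D6 (v : GPt) (k : Fin 3) :
    v = v + (0 : ZMod 3) • e k ∧ v + e k = v + (1 : ZMod 3) • e k := by
  have h := D6' (v 0) (v 1) (v 2) k
  rwa [← gpt_eta v] at h

/-! ### Basic real plane lemmas -/

lemma s3_pos : 0 < s3 := Real.sqrt_pos.mpr (by norm_num)
lemma s3_ne : s3 ≠ 0 := ne_of_gt s3_pos
lemma s3_sq : s3 * s3 = 3 := Real.mul_self_sqrt (by norm_num)

@[simp] lemma pt_apply0 (x y : ℝ) : pt x y 0 = x := rfl
@[simp] lemma pt_apply1 (x y : ℝ) : pt x y 1 = y := rfl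

lemma pt_congr {a b c d : ℝ} (h1 : a = c) (h2 : b = d) : pt a b = pt c d := by
  rw [h1, h2]

lemma Pt.ext_iff' (P Q : Pt) : P = Q ↔ P 0 = Q 0 ∧ P 1 = Q 1 := by
  constructor
  · rintro rfl; exact ⟨rfl, rfl⟩
  · rintro ⟨h0, h1⟩
    ext i
    fin_cases i
    · exact h0
    · exact h1

lemma comb_apply (A B : Pt) (t : ℝ) (i : Fin 2) :
    (A + t • (B - A)) i = A i + t * (B i - A i) := rfl

lemma mem_lineThrough_iff {A B : Pt} (h : A 0 ≠ B 0 ∨ A 1 ≠ B 1) (P : Pt) :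
    P ∈ lineThrough A B ↔ (P 0 - A 0) * (B 1 - A 1) = (P 1 - A 1) * (B 0 - A 0) := by
  constructor
  · rintro ⟨t, rfl⟩
    rw [comb_apply, comb_apply]
    ring
  · intro hc
    rcases h with h | h
    · have hne : B 0 - A 0 ≠ 0 := sub_ne_zero.mpr (Ne.symm h)
      refine ⟨(P 0 - A 0) / (B 0 - A 0), ?_⟩
      rw [Pt.ext_iff', comb_apply, comb_apply]
      constructor
      · field_simp; ring
      · field_simp
        first
        | linear_combination (2 : ℝ) * hc
        | linear_combination (-2 : ℝ) * hc
        | linear_combination hc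
        | linear_combination -hc
    · have hne : B 1 - A 1 ≠ 0 := sub_ne_zero.mpr (Ne.symm h)
      refine ⟨(P 1 - A 1) / (B 1 - A 1), ?_⟩
      rw [Pt.ext_iff', comb_apply, comb_apply]
      constructor
      · field_simp
        first
        | linear_combination (2 : ℝ) * hc
        | linear_combination (-2 : ℝ) * hc
        | linear_combination hc
        | linear_combination -hc
      · field_simp; ring

lemma lineThrough_eq_of_mem {A B C D : Pt} (hC : C ∈ lineThrough A B)
    (hD : D ∈ lineThrough A B) (hCD : C ≠ D) : lineThrough C D = lineThrough A B := by
  obtain ⟨s, rfl⟩ := hC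
  obtain ⟨s', rfl⟩ := hD
  have hss : s ≠ s' := by
    intro hh
    exact hCD (by rw [hh])
  have hne : s' - s ≠ 0 := sub_ne_zero.mpr (Ne.symm hss)
  ext P
  constructor
  · rintro ⟨t, rfl⟩
    refine ⟨s + t * (s' - s), ?_⟩
    module
  · rintro ⟨r, rfl⟩
    refine ⟨(r - s) / (s' - s), ?_⟩
    have hq : (r - s) / (s' - s) * (s' - s) = r - s := div_mul_cancel₀ _ hne
    have hne' : -s + s' ≠ 0 := by
      intro hh
      exact hne (by linarith)
    match_scalars <;> field_simp <;> ring

/-! ### The realization -/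

lemma pmap_inj : Function.Injective pmap := by
  intro v w h
  rw [pmap, pmap, Pt.ext_iff'] at h
  simp only [pt_apply0, pt_apply1] at h
  have h1 : iA v = iA w := Int.cast_injective h.1
  have h2 : iB v = iB w := by
    have := mul_right_cancel₀ s3_ne h.2
    exact_mod_cast this
  exact D0 v w h1 h2

lemma base_ne (v : GPt) (k : Fin 3) :
    pmap v 0 ≠ pmap (v + e k) 0 ∨ pmap v 1 ≠ pmap (v + e k) 1 := by
  by_contra hcon
  push_neg at hcon
  exact D5 v k (pmap_inj ((Pt.ext_iff' _ _).mpr hcon))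

lemma cross_eq (v : GPt) (k : Fin 3) (w : GPt) :
    ((pmap w 0 - pmap v 0) * (pmap (v + e k) 1 - pmap v 1)
      = (pmap w 1 - pmap v 1) * (pmap (v + e k) 0 - pmap v 0))
    ↔ icross v k w = 0 := by
  have key : (pmap w 0 - pmap v 0) * (pmap (v + e k) 1 - pmap v 1)
      - (pmap w 1 - pmap v 1) * (pmap (v + e k) 0 - pmap v 0)
      = (icross v k w : ℝ) * s3 := by
    simp only [pmap, pt_apply0, pt_apply1, icross]
    push_cast
    ring
  constructor
  · intro h
    have h0 : (icross v k w : ℝ) * s3 = 0 := by rw [← key]; linarith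
    rcases mul_eq_zero.mp h0 with h' | h'
    · exact_mod_cast h'
    · exact absurd h' s3_ne
  · intro h
    have h0 : (pmap w 0 - pmap v 0) * (pmap (v + e k) 1 - pmap v 1)
      - (pmap w 1 - pmap v 1) * (pmap (v + e k) 0 - pmap v 0) = 0 := by
      rw [key, h]; simp
    linarith

lemma mem_base (v : GPt) (k : Fin 3) (t : ZMod 3) :
    pmap (v + t • e k) ∈ lineThrough (pmap v) (pmap (v + e k)) :=
  (mem_lineThrough_iff (base_ne v k) _).mpr ((cross_eq v k _).mpr (D2 v k t))

def Lmap (ℓ : GrayLine) : Set Pt :=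
  {P | ∃ a ∈ ℓ.1, ∃ b ∈ ℓ.1, a ≠ b ∧ P ∈ lineThrough (pmap a) (pmap b)}

lemma Lmap_eq (v : GPt) (k : Fin 3) (ℓ : GrayLine) (hl : ℓ.1 = grayLine v k) :
    Lmap ℓ = lineThrough (pmap v) (pmap (v + e k)) := by
  ext P
  constructor
  · rintro ⟨a, ha, b, hb, hab, hP⟩
    rw [hl] at ha hb
    obtain ⟨t1, rfl⟩ := ha
    obtain ⟨t2, rfl⟩ := hb
    rw [← lineThrough_eq_of_mem (mem_base v k t1) (mem_base v k t2)
      (fun hh => hab (pmap_inj hh))]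
    exact hP
  · intro hP
    refine ⟨v, ?_, v + e k, ?_, D5 v k, ?_⟩
    · rw [hl]; exact ⟨0, (D6 v k).1⟩
    · rw [hl]; exact ⟨1, (D6 v k).2⟩
    · exact hP

lemma incidence (w : GPt) (ℓ : GrayLine) : pmap w ∈ Lmap ℓ ↔ w ∈ ℓ.1 := by
  obtain ⟨v, k, hl⟩ := ℓ.2
  rw [Lmap_eq v k ℓ hl, hl, mem_lineThrough_iff (base_ne v k), cross_eq]
  constructor
  · intro h
    obtain ⟨t, rfl⟩ := D3 v k w h
    exact ⟨t, rfl⟩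
  · rintro ⟨t, rfl⟩
    exact D2 v k t

lemma Lmap_inj : Function.Injective Lmap := by
  intro ℓ ℓ' h
  apply Subtype.ext
  ext w
  rw [← incidence w ℓ, ← incidence w ℓ', h]

/-! ### Rotation -/

lemma rot_apply (x y : ℝ) :
    rotAbout (2 * π / 3) (pt 0 0) (pt x y)
      = pt (-x / 2 - s3 / 2 * y) (s3 / 2 * x - y / 2) := by
  have hc : Real.cos (2 * π / 3) = -(1 / 2) := by
    rw [show 2 * π / 3 = π - π / 3 by ring, Real.cos_pi_sub, Real.cos_pi_div_three]
  have hs : Real.sin (2 * π / 3) = s3 / 2 := by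
    rw [show 2 * π / 3 = π - π / 3 by ring, Real.sin_pi_sub, Real.sin_pi_div_three]
    rfl
  rw [rotAbout, hc, hs]
  simp only [pt_apply0, pt_apply1]
  exact pt_congr (by ring) (by ring)

lemma rot_pmap (v : GPt) :
    rotAbout (2 * π / 3) (pt 0 0) (pmap v) = pmap (v + o) := by
  obtain ⟨h1, h2⟩ := D4 v
  have h1' : (iA (v + o) : ℝ) = -(iA v : ℝ) / 2 - 3 * (iB v : ℝ) / 2 := by
    have := congrArg (fun n : ℤ => (n : ℝ)) h1
    push_cast at this
    linarith
  have h2' : (iB (v + o) : ℝ) = (iA v : ℝ) / 2 - (iB v : ℝ) / 2 := by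
    have := congrArg (fun n : ℤ => (n : ℝ)) h2
    push_cast at this
    linarith
  rw [pmap, pmap, rot_apply]
  refine pt_congr ?_ ?_
  · rw [h1']
    first
    | linear_combination (-(iB v : ℝ) / 2) * s3_sq
    | linear_combination ((iB v : ℝ) / 2) * s3_sq
  · rw [h2']
    ring

lemma rot_affine (θ : ℝ) (c A B : Pt) (t : ℝ) :
    rotAbout θ c (A + t • (B - A))
      = rotAbout θ c A + t • (rotAbout θ c B - rotAbout θ c A) := by
  rw [Pt.ext_iff']
  constructor
  · rw [comb_apply]
    simp only [rotAbout, pt_apply0, pt_apply1, comb_apply]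
    ring
  · rw [comb_apply]
    simp only [rotAbout, pt_apply0, pt_apply1, comb_apply]
    ring

lemma rot_image (θ : ℝ) (c A B : Pt) :
    rotAbout θ c '' lineThrough A B = lineThrough (rotAbout θ c A) (rotAbout θ c B) := by
  ext P
  constructor
  · rintro ⟨Q, ⟨t, rfl⟩, rfl⟩
    exact ⟨t, rot_affine θ c A B t⟩
  · rintro ⟨t, rfl⟩
    exact ⟨A + t • (B - A), ⟨t, rfl⟩, rot_affine θ c A B t⟩

lemma image_grayLine (v : GPt) (k : Fin 3) :
    (fun u => u + o) '' grayLine v k = grayLine (v + o) k := by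
  ext w
  constructor
  · rintro ⟨u, ⟨t, rfl⟩, rfl⟩
    exact ⟨t, add_right_comm v (t • e k) o⟩
  · rintro ⟨t, rfl⟩
    exact ⟨v + t • e k, ⟨t, rfl⟩, add_right_comm v (t • e k) o⟩

end GrayAux

open GrayAux in
theorem gray_polycyclic_realization_Pappus_RLG :
    ∃ (p : GPt → Pt) (L : GrayLine → Set Pt) (c : Pt),
      Function.Injective p ∧ Function.Injective L ∧
      (∀ ℓ : GrayLine, IsAffineLine (L ℓ)) ∧
      (∀ (v : GPt) (ℓ : GrayLine), p v ∈ L ℓ ↔ v ∈ ℓ.1) ∧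
      (∀ v : GPt, rotAbout (2 * π / 3) c (p v) = p (v + ![1, 1, 1])) ∧
      (∀ ℓ ℓ' : GrayLine, ℓ'.1 = (fun u => u + ![1, 1, 1]) '' ℓ.1 →
        rotAbout (2 * π / 3) c '' L ℓ = L ℓ') := by
  refine ⟨pmap, Lmap, pt 0 0, pmap_inj, Lmap_inj, ?_, ?_, ?_, ?_⟩
  · intro ℓ
    obtain ⟨v, k, hl⟩ := ℓ.2
    exact ⟨pmap v, pmap (v + e k), pmap_inj.ne (D5 v k), Lmap_eq v k ℓ hl⟩
  · intro v ℓ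
    exact incidence v ℓ
  · intro v
    exact rot_pmap v
  · intro ℓ ℓ' h
    obtain ⟨v, k, hl⟩ := ℓ.2
    have hl' : ℓ'.1 = grayLine (v + o) k := by
      rw [h, hl, image_grayLine]
    rw [Lmap_eq v k ℓ hl, Lmap_eq (v + o) k ℓ' hl', rot_image, rot_pmap, rot_pmap,
      add_right_comm v (e k) o]
end
end

section
/- The automorphism group of the Gray graph is isomorphic to the wreath product S₃ ≀ S₃, that is, to the semidirect product (S₃ × S₃ × S₃) ⋊ S₃ in which S₃ denotes the symmetric group on 3 letters and the outer S₃ acts on S₃ × S₃ × S₃ by permuting the three direct factors. -/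
/- STATEMENT 8: The automorphism group of the Gray graph is isomorphic to the wreath
product S₃ ≀ S₃, i.e. to the semidirect product (S₃ × S₃ × S₃) ⋊ S₃ where the outer S₃
permutes the three direct factors. Here the automorphism group is formalized as the
subgroup of permutations of the vertex set preserving adjacency, S₃ as `Equiv.Perm (Fin 3)`,
S₃ × S₃ × S₃ as `Fin 3 → Equiv.Perm (Fin 3)`, and the permutation action of the outer S₃
on the triple product is the homomorphism `permuteFactors`. -/

noncomputable section

/-- The Gray graph: the bipartite incidence graph of the Gray configuration. -/
def grayGraph : SimpleGraph (GPt ⊕ GrayLine) where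
  Adj x y :=
    (∃ (v : GPt) (ℓ : GrayLine), x = Sum.inl v ∧ y = Sum.inr ℓ ∧ v ∈ ℓ.1) ∨
    (∃ (v : GPt) (ℓ : GrayLine), x = Sum.inr ℓ ∧ y = Sum.inl v ∧ v ∈ ℓ.1)
  symm := by
    constructor
    rintro x y (⟨v, ℓ, hx, hy, hm⟩ | ⟨v, ℓ, hx, hy, hm⟩)
    · exact Or.inr ⟨v, ℓ, hy, hx, hm⟩
    · exact Or.inl ⟨v, ℓ, hy, hx, hm⟩
  loopless := by
    constructor
    rintro x (⟨v, ℓ, hx, hy, _⟩ | ⟨v, ℓ, hx, hy, _⟩) <;> subst hx <;> simp at hy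

/-- The automorphism group of the Gray graph, as the subgroup of permutations of the
vertex set preserving adjacency. -/
def grayAut : Subgroup (Equiv.Perm (GPt ⊕ GrayLine)) where
  carrier := {σ | ∀ x y, grayGraph.Adj (σ x) (σ y) ↔ grayGraph.Adj x y}
  one_mem' := by intro x y; simp
  mul_mem' := by
    intro σ τ hσ hτ x y
    simpa [Equiv.Perm.mul_apply] using (hσ (τ x) (τ y)).trans (hτ x y)
  inv_mem' := by
    intro σ hσ x y
    simpa using (hσ (σ⁻¹ x) (σ⁻¹ y)).symm

/-- The action of the outer S₃ on S₃ × S₃ × S₃ = (Fin 3 → S₃) permuting the three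
direct factors. -/
def permuteFactors : Equiv.Perm (Fin 3) →* MulAut (Fin 3 → Equiv.Perm (Fin 3)) where
  toFun σ :=
    { toFun := fun f i => f (σ⁻¹ i)
      invFun := fun f i => f (σ i)
      left_inv := fun f => by funext i; simp
      right_inv := fun f => by funext i; simp
      map_mul' := fun f g => rfl }
  map_one' := by ext f i; simp
  map_mul' := by intro σ τ; ext f i; simp [mul_inv_rev]

namespace GrayProof

/-- collinearity of two (distinct) points -/
def Col (u v : GPt) : Prop := u ≠ v ∧ ∃ k, ∀ j, j ≠ k → u j = v j
instance : DecidableRel Col := fun u v => by unfold Col; infer_instance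

lemma col_symm {u v : GPt} (h : Col u v) : Col v u :=
  ⟨h.1.symm, h.2.choose, fun j hj => (h.2.choose_spec j hj).symm⟩

lemma mem_grayLine {w v : GPt} {k : Fin 3} : w ∈ grayLine v k ↔ ∀ j, j ≠ k → w j = v j := by
  constructor
  · rintro ⟨t, rfl⟩ j hj
    simp [Pi.single_eq_of_ne hj]
  · intro h
    refine ⟨w k - v k, funext fun j => ?_⟩
    by_cases hj : j = k
    · subst hj; simp
    · simp [Pi.single_eq_of_ne hj, h j hj]

def mkLine (v : GPt) (k : Fin 3) : GrayLine := ⟨grayLine v k, v, k, rfl⟩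

lemma mem_mkLine {w v : GPt} {k : Fin 3} : w ∈ (mkLine v k).1 ↔ ∀ j, j ≠ k → w j = v j :=
  mem_grayLine

lemma self_mem_mkLine (v : GPt) (k : Fin 3) : v ∈ (mkLine v k).1 :=
  mem_mkLine.mpr fun _ _ => rfl

lemma exists_line_iff {u v : GPt} :
    (∃ ℓ : GrayLine, u ∈ ℓ.1 ∧ v ∈ ℓ.1) ↔ u = v ∨ Col u v := by
  constructor
  · rintro ⟨⟨s, w, k, rfl⟩, h1, h2⟩
    rcases eq_or_ne u v with h | h
    · exact Or.inl h
    · refine Or.inr ⟨h, k, fun j hj => ?_⟩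
      rw [mem_grayLine.mp h1 j hj, mem_grayLine.mp h2 j hj]
  · rintro (rfl | ⟨h, k, hk⟩)
    · exact ⟨mkLine u 0, self_mem_mkLine u 0, self_mem_mkLine u 0⟩
    · exact ⟨mkLine v k, mem_mkLine.mpr hk, self_mem_mkLine v k⟩

lemma adj_inl_inr {u : GPt} {ℓ : GrayLine} :
    grayGraph.Adj (Sum.inl u) (Sum.inr ℓ) ↔ u ∈ ℓ.1 := by
  simp [grayGraph]

lemma adj_inr_inl {u : GPt} {ℓ : GrayLine} :
    grayGraph.Adj (Sum.inr ℓ) (Sum.inl u) ↔ u ∈ ℓ.1 := by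
  simp [grayGraph]

lemma not_adj_inl_inl {u v : GPt} : ¬ grayGraph.Adj (Sum.inl u) (Sum.inl v) := by
  simp [grayGraph]

lemma not_adj_inr_inr {ℓ m : GrayLine} : ¬ grayGraph.Adj (Sum.inr ℓ) (Sum.inr m) := by
  simp [grayGraph]

lemma common_inl_iff {u v : GPt} :
    (∃ w, grayGraph.Adj (Sum.inl u) w ∧ grayGraph.Adj (Sum.inl v) w) ↔ (u = v ∨ Col u v) := by
  constructor
  · rintro ⟨(p | ℓ), h1, h2⟩
    · exact absurd h1 not_adj_inl_inl
    · exact exists_line_iff.mp ⟨ℓ, adj_inl_inr.mp h1, adj_inl_inr.mp h2⟩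
  · intro h
    obtain ⟨ℓ, h1, h2⟩ := exists_line_iff.mpr h
    exact ⟨Sum.inr ℓ, adj_inl_inr.mpr h1, adj_inl_inr.mpr h2⟩

def D2 (x z : GPt ⊕ GrayLine) : Prop :=
  z ≠ x ∧ ∃ w, grayGraph.Adj x w ∧ grayGraph.Adj z w

/-- An adjacency-theoretic predicate distinguishing line-vertices from point-vertices. -/
def PP (x : GPt ⊕ GrayLine) : Prop :=
  ∃ y z₁ z₂ z₃, (¬ ∃ w, grayGraph.Adj x w ∧ grayGraph.Adj y w) ∧
    z₁ ≠ z₂ ∧ z₁ ≠ z₃ ∧ z₂ ≠ z₃ ∧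
    (D2 x z₁ ∧ D2 y z₁) ∧ (D2 x z₂ ∧ D2 y z₂) ∧ (D2 x z₃ ∧ D2 y z₃)

lemma common_map {σ : Equiv.Perm (GPt ⊕ GrayLine)} (hσ : σ ∈ grayAut) (a b : GPt ⊕ GrayLine) :
    (∃ w, grayGraph.Adj (σ a) w ∧ grayGraph.Adj (σ b) w) ↔
      (∃ w, grayGraph.Adj a w ∧ grayGraph.Adj b w) := by
  constructor
  · rintro ⟨w, h1, h2⟩
    refine ⟨σ.symm w, ?_, ?_⟩
    · have := (hσ a (σ.symm w)).mp (by simpa using h1)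
      exact this
    · exact (hσ b (σ.symm w)).mp (by simpa using h2)
  · rintro ⟨w, h1, h2⟩
    exact ⟨σ w, (hσ a w).mpr h1, (hσ b w).mpr h2⟩

lemma D2_map {σ : Equiv.Perm (GPt ⊕ GrayLine)} (hσ : σ ∈ grayAut) {x z : GPt ⊕ GrayLine}
    (h : D2 x z) : D2 (σ x) (σ z) := by
  obtain ⟨hne, w, h1, h2⟩ := h
  exact ⟨fun he => hne (σ.injective he), σ w, (hσ x w).mpr h1, (hσ z w).mpr h2⟩

lemma PP_map {σ : Equiv.Perm (GPt ⊕ GrayLine)} (hσ : σ ∈ grayAut) {x : GPt ⊕ GrayLine}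
    (h : PP x) : PP (σ x) := by
  obtain ⟨y, z₁, z₂, z₃, hnc, h12, h13, h23, ⟨a1, b1⟩, ⟨a2, b2⟩, ⟨a3, b3⟩⟩ := h
  refine ⟨σ y, σ z₁, σ z₂, σ z₃, ?_, fun he => h12 (σ.injective he),
    fun he => h13 (σ.injective he), fun he => h23 (σ.injective he),
    ⟨D2_map hσ a1, D2_map hσ b1⟩, ⟨D2_map hσ a2, D2_map hσ b2⟩, ⟨D2_map hσ a3, D2_map hσ b3⟩⟩
  rw [common_map hσ]
  exact hnc

lemma PP_iff {σ : Equiv.Perm (GPt ⊕ GrayLine)} (hσ : σ ∈ grayAut) (x : GPt ⊕ GrayLine) :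
    PP (σ x) ↔ PP x := by
  constructor
  · intro h
    have := PP_map (grayAut.inv_mem hσ) h
    simpa using this
  · exact PP_map hσ

lemma mu_fact : ∀ u v : GPt, u ≠ v → ¬ Col u v →
    (Finset.univ.filter fun z => Col z u ∧ Col z v).card ≤ 2 := by decide

lemma not_PP_inl (v : GPt) : ¬ PP (Sum.inl v) := by
  rintro ⟨y, z₁, z₂, z₃, hnc, h12, h13, h23, ⟨a1, b1⟩, ⟨a2, b2⟩, ⟨a3, b3⟩⟩
  -- each zᵢ is a point collinear with v
  have key : ∀ z : GPt ⊕ GrayLine, D2 (Sum.inl v) z → ∃ u : GPt, z = Sum.inl u ∧ Col u v := by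
    rintro z ⟨hne, (p | ℓ), h1, h2⟩
    · exact absurd h1 not_adj_inl_inl
    · rcases z with u | m
      · have hu : u ∈ ℓ.1 := adj_inl_inr.mp h2
        have hv : v ∈ ℓ.1 := adj_inl_inr.mp h1
        rcases exists_line_iff.mp ⟨ℓ, hu, hv⟩ with h | h
        · exact absurd (congrArg Sum.inl h) hne
        · exact ⟨u, rfl, h⟩
      · exact absurd h2 not_adj_inr_inr
  obtain ⟨u₁, rfl, hc1⟩ := key _ a1
  obtain ⟨u₂, rfl, hc2⟩ := key _ a2
  obtain ⟨u₃, rfl, hc3⟩ := key _ a3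
  -- y is a point, since it has a common "distance-2" vertex with a point
  have hy : ∃ u₀ : GPt, y = Sum.inl u₀ := by
    obtain ⟨hne, w, hw1, hw2⟩ := b1
    rcases w with p | m
    · exact absurd hw2 not_adj_inl_inl
    · rcases y with u₀ | m'
      · exact ⟨u₀, rfl⟩
      · exact absurd hw1 not_adj_inr_inr
  obtain ⟨u₀, rfl⟩ := hy
  have keyy : ∀ u : GPt, D2 (Sum.inl u₀) (Sum.inl u) → Col u u₀ := by
    rintro u ⟨hne, w, h1, h2⟩
    rcases w with p | ℓ
    · exact absurd h1 not_adj_inl_inl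
    · rcases exists_line_iff.mp ⟨ℓ, adj_inl_inr.mp h2, adj_inl_inr.mp h1⟩ with h | h
      · exact absurd (congrArg Sum.inl h) hne
      · exact h
  have hd1 := keyy _ b1
  have hd2 := keyy _ b2
  have hd3 := keyy _ b3
  have hvu : v ≠ u₀ ∧ ¬ Col v u₀ := by
    constructor
    · rintro rfl
      exact hnc ⟨Sum.inr (mkLine v 0), adj_inl_inr.mpr (self_mem_mkLine v 0),
        adj_inl_inr.mpr (self_mem_mkLine v 0)⟩
    · intro h
      exact hnc (common_inl_iff.mpr (Or.inr h))
  have hcard := mu_fact v u₀ hvu.1 hvu.2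
  have hmem : ∀ u : GPt, Col u v → Col u u₀ →
      u ∈ Finset.univ.filter fun z => Col z v ∧ Col z u₀ := by
    intro u h1 h2
    simp [h1, h2]
  have : 2 < (Finset.univ.filter fun z => Col z v ∧ Col z u₀).card := by
    rw [Finset.two_lt_card]
    exact ⟨u₁, hmem _ hc1 hd1, u₂, hmem _ hc2 hd2, u₃, hmem _ hc3 hd3,
      fun h => h12 (congrArg Sum.inl h), fun h => h13 (congrArg Sum.inl h),
      fun h => h23 (congrArg Sum.inl h)⟩
  omega

lemma fin3_add_one_ne : ∀ k : Fin 3, k + 1 ≠ k := by decide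

lemma PP_mkLine (v : GPt) (k : Fin 3) : PP (Sum.inr (mkLine v k)) := by
  have hA : (k + 1 : Fin 3) ≠ k := fin3_add_one_ne k
  set x : GrayLine := mkLine v k with hx
  set y : GrayLine := mkLine (v + Pi.single (k+1) 1) k with hy
  set z : ZMod 3 → GrayLine := fun t => mkLine (v + Pi.single k t) (k+1) with hz
  -- memberships
  have hq1 : ∀ t : ZMod 3, (v + Pi.single k t) ∈ x.1 := by
    intro t
    rw [hx, mem_mkLine]
    intro j hj
    simp [Pi.single_eq_of_ne hj]
  have hq2 : ∀ t : ZMod 3, (v + Pi.single k t) ∈ (z t).1 := fun t => self_mem_mkLine _ _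
  have hq3 : ∀ t : ZMod 3, (v + Pi.single k t + Pi.single (k+1) 1) ∈ (z t).1 := by
    intro t
    rw [hz, mem_mkLine]
    intro j hj
    simp [Pi.single_eq_of_ne hj]
  have hq4 : ∀ t : ZMod 3, (v + Pi.single k t + Pi.single (k+1) 1) ∉ x.1 := by
    intro t h
    rw [hx, mem_mkLine] at h
    have := h (k+1) hA
    simp [Pi.single_eq_of_ne hA, Pi.single_eq_same] at this
  have hq5 : ∀ t : ZMod 3, (v + Pi.single (k+1) 1 + Pi.single k t) ∈ y.1 := by
    intro t
    rw [hy, mem_mkLine]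
    intro j hj
    simp [Pi.single_eq_of_ne hj]
  have hq6 : ∀ t : ZMod 3, (v + Pi.single (k+1) 1 + Pi.single k t) ∈ (z t).1 := by
    intro t
    rw [hz, mem_mkLine]
    intro j hj
    simp [Pi.single_eq_of_ne hj]
  have hq7 : ∀ t : ZMod 3, (v + Pi.single k t) ∉ y.1 := by
    intro t h
    rw [hy, mem_mkLine] at h
    have := h (k+1) hA
    simp [Pi.single_eq_of_ne hA, Pi.single_eq_same] at this
  -- distinctness of the z's
  have hz_ne : ∀ t u : ZMod 3, t ≠ u → z t ≠ z u := by
    intro t u htu he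
    have h1 := hq2 t
    rw [he, hz, mem_mkLine] at h1
    have := h1 k (Ne.symm hA)
    simp [Pi.single_eq_same] at this
    exact htu this
  have hzx : ∀ t : ZMod 3, (z t : GrayLine) ≠ x := by
    intro t he
    exact hq4 t (he ▸ hq3 t)
  have hzy : ∀ t : ZMod 3, (z t : GrayLine) ≠ y := by
    intro t he
    exact hq7 t (he ▸ hq2 t)
  -- D2 facts
  have hD2x : ∀ t : ZMod 3, D2 (Sum.inr x) (Sum.inr (z t)) := by
    intro t
    exact ⟨fun h => hzx t (Sum.inr.inj h), Sum.inl (v + Pi.single k t),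
      adj_inr_inl.mpr (hq1 t), adj_inr_inl.mpr (hq2 t)⟩
  have hD2y : ∀ t : ZMod 3, D2 (Sum.inr y) (Sum.inr (z t)) := by
    intro t
    exact ⟨fun h => hzy t (Sum.inr.inj h), Sum.inl (v + Pi.single (k+1) 1 + Pi.single k t),
      adj_inr_inl.mpr (hq5 t), adj_inr_inl.mpr (hq6 t)⟩
  -- x and y have no common neighbour
  have hnc : ¬ ∃ w, grayGraph.Adj (Sum.inr x) w ∧ grayGraph.Adj (Sum.inr y) w := by
    rintro ⟨(q | m), h1, h2⟩
    · have hqx : q ∈ x.1 := adj_inr_inl.mp h1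
      have hqy : q ∈ y.1 := adj_inr_inl.mp h2
      rw [hx, mem_mkLine] at hqx
      rw [hy, mem_mkLine] at hqy
      have e1 := hqx (k+1) hA
      have e2 := hqy (k+1) hA
      rw [e1] at e2
      simp [Pi.single_eq_same] at e2
    · exact not_adj_inr_inr h1
  refine ⟨Sum.inr y, Sum.inr (z 0), Sum.inr (z 1), Sum.inr (z 2),
    hnc, ?_, ?_, ?_, ⟨hD2x 0, hD2y 0⟩, ⟨hD2x 1, hD2y 1⟩, ⟨hD2x 2, hD2y 2⟩⟩
  · exact fun h => hz_ne 0 1 (by decide) (Sum.inr.inj h)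
  · exact fun h => hz_ne 0 2 (by decide) (Sum.inr.inj h)
  · exact fun h => hz_ne 1 2 (by decide) (Sum.inr.inj h)

lemma PP_inr (ℓ : GrayLine) : PP (Sum.inr ℓ) := by
  obtain ⟨s, hs⟩ := ℓ
  obtain ⟨v, k, rfl⟩ := hs
  have : (⟨grayLine v k, ⟨v, k, rfl⟩⟩ : GrayLine) = mkLine v k := Subtype.ext rfl
  exact this ▸ PP_mkLine v k

/-- The point action of a wreath-product element. -/
def wAct (n : Fin 3 → Equiv.Perm (Fin 3)) (h : Equiv.Perm (Fin 3)) : GPt ≃ GPt where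
  toFun x i := n i (x (h⁻¹ i))
  invFun y i := (n (h i))⁻¹ (y (h i))
  left_inv x := by funext i; simp; exact (n (h i)).symm_apply_apply _
  right_inv y := by funext i; simp; exact (n i).apply_symm_apply _

lemma wAct_apply (n : Fin 3 → Equiv.Perm (Fin 3)) (h : Equiv.Perm (Fin 3)) (x : GPt) (i : Fin 3) :
    wAct n h x i = n i (x (h⁻¹ i)) := rfl

lemma wAct_symm_apply (n : Fin 3 → Equiv.Perm (Fin 3)) (h : Equiv.Perm (Fin 3)) (y : GPt)
    (i : Fin 3) : (wAct n h).symm y i = (n (h i))⁻¹ (y (h i)) := rfl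

lemma wAct_symm (n : Fin 3 → Equiv.Perm (Fin 3)) (h : Equiv.Perm (Fin 3)) :
    (wAct n h).symm = wAct (fun i => (n (h i))⁻¹) h⁻¹ := by
  apply Equiv.ext
  intro y
  funext i
  rw [wAct_symm_apply, wAct_apply]
  simp
  rfl

lemma wAct_image (n : Fin 3 → Equiv.Perm (Fin 3)) (h : Equiv.Perm (Fin 3)) (v : GPt) (k : Fin 3) :
    (wAct n h) '' grayLine v k = grayLine (wAct n h v) (h k) := by
  ext y
  rw [Set.mem_image_equiv, mem_grayLine, mem_grayLine]
  constructor
  · intro H j' hj'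
    have hj : h.symm j' ≠ k := fun he => hj' (by rw [← he, Equiv.apply_symm_apply])
    have h2 := H (h.symm j') hj
    rw [wAct_symm_apply, Equiv.apply_symm_apply] at h2
    rw [wAct_apply, show (h⁻¹ : Equiv.Perm (Fin 3)) j' = h.symm j' from rfl, ← h2]
    simp
    exact ((n j').apply_symm_apply _).symm
  · intro H j hj
    have h2 := H (h j) (fun he => hj (h.injective he))
    rw [wAct_apply] at h2
    rw [wAct_symm_apply, h2]
    simp
    exact (n (h j)).symm_apply_apply _

/-- The induced action on lines. -/
def lineMap (n : Fin 3 → Equiv.Perm (Fin 3)) (h : Equiv.Perm (Fin 3)) : GrayLine ≃ GrayLine where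
  toFun ℓ := ⟨(wAct n h) '' ℓ.1, by
    obtain ⟨v, k, hv⟩ := ℓ.2
    exact ⟨wAct n h v, h k, by rw [hv, wAct_image]⟩⟩
  invFun ℓ := ⟨(wAct n h).symm '' ℓ.1, by
    obtain ⟨v, k, hv⟩ := ℓ.2
    rw [wAct_symm]
    exact ⟨_, _, by rw [hv, wAct_image]⟩⟩
  left_inv ℓ := Subtype.ext (by
    simp only [Set.image_image, Equiv.symm_apply_apply]
    simp)
  right_inv ℓ := Subtype.ext (by
    simp only [Set.image_image, Equiv.apply_symm_apply]
    simp)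

lemma mem_lineMap {n : Fin 3 → Equiv.Perm (Fin 3)} {h : Equiv.Perm (Fin 3)} {u : GPt}
    {ℓ : GrayLine} : u ∈ ((lineMap n h) ℓ).1 ↔ (wAct n h).symm u ∈ ℓ.1 := by
  simp only [lineMap, Equiv.coe_fn_mk, Set.mem_image_equiv]

abbrev W := SemidirectProduct (Fin 3 → Equiv.Perm (Fin 3)) (Equiv.Perm (Fin 3)) permuteFactors

/-- Wreath element acting on the Gray graph. -/
def graphPerm (w : W) : Equiv.Perm (GPt ⊕ GrayLine) :=
  Equiv.sumCongr (wAct w.left w.right) (lineMap w.left w.right)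

lemma graphPerm_mem (w : W) : graphPerm w ∈ grayAut := by
  intro a b
  have key : ∀ (u : GPt) (ℓ : GrayLine) (n : Fin 3 → Equiv.Perm (Fin 3))
      (h : Equiv.Perm (Fin 3)), (wAct n h u ∈ ((lineMap n h) ℓ).1 ↔ u ∈ ℓ.1) := by
    intro u ℓ n h
    rw [mem_lineMap, Equiv.symm_apply_apply]
  rcases a with u | ℓ <;> rcases b with u' | ℓ'
  · simp [graphPerm, not_adj_inl_inl]
  · simp only [graphPerm, Equiv.sumCongr_apply, Sum.map_inl, Sum.map_inr, adj_inl_inr]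
    exact key u ℓ' _ _
  · simp only [graphPerm, Equiv.sumCongr_apply, Sum.map_inl, Sum.map_inr, adj_inr_inl]
    exact key u' ℓ _ _
  · simp [graphPerm, not_adj_inr_inr]

lemma wAct_mul (w₁ w₂ : W) :
    ∀ x : GPt, wAct (w₁ * w₂).left (w₁ * w₂).right x
      = wAct w₁.left w₁.right (wAct w₂.left w₂.right x) := by
  intro x
  funext i
  rw [wAct_apply, wAct_apply, wAct_apply]
  rw [SemidirectProduct.mul_left, SemidirectProduct.mul_right]
  simp [permuteFactors, mul_inv_rev]
  rfl

lemma graphPerm_mul (w₁ w₂ : W) :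
    graphPerm (w₁ * w₂) = graphPerm w₁ * graphPerm w₂ := by
  apply Equiv.ext
  rintro (u | ℓ)
  · simp only [graphPerm, Equiv.Perm.mul_apply, Equiv.sumCongr_apply, Sum.map_inl]
    rw [wAct_mul]
  · simp only [graphPerm, Equiv.Perm.mul_apply, Equiv.sumCongr_apply, Sum.map_inr]
    congr 1
    apply Subtype.ext
    simp only [lineMap, Equiv.coe_fn_mk, Set.image_image]
    apply Set.image_congr
    intro a _
    exact wAct_mul w₁ w₂ a

lemma wAct_one : wAct (1 : W).left (1 : W).right = Equiv.refl GPt := by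
  apply Equiv.ext
  intro x
  funext i
  rw [wAct_apply]
  simp [SemidirectProduct.one_left, SemidirectProduct.one_right]
  rfl

/-- The homomorphism from the wreath product into the automorphism group. -/
def Phi : W →* grayAut where
  toFun w := ⟨graphPerm w, graphPerm_mem w⟩
  map_one' := by
    apply Subtype.ext
    apply Equiv.ext
    rintro (u | ℓ)
    · simp only [graphPerm, Equiv.sumCongr_apply, Sum.map_inl]
      rw [wAct_one]
      rfl
    · simp only [graphPerm, Equiv.sumCongr_apply, Sum.map_inr]
      have : lineMap (1 : W).left (1 : W).right ℓ = ℓ := by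
        apply Subtype.ext
        simp only [lineMap, Equiv.coe_fn_mk, wAct_one]
        simp
      rw [this]
      rfl
  map_mul' w₁ w₂ := Subtype.ext (graphPerm_mul w₁ w₂)

lemma Phi_injective : Function.Injective Phi := by
  rw [injective_iff_map_eq_one]
  intro w hw
  have h1 : ∀ x : GPt ⊕ GrayLine, graphPerm w x = x := by
    intro x
    have := congrArg (fun s => s.1 x) hw
    exact this
  have hpt : ∀ x : GPt, wAct w.left w.right x = x := by
    intro x
    have := h1 (Sum.inl x)
    simpa [graphPerm] using this
  have hn : w.left = 1 := by
    funext i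
    apply Equiv.ext
    intro c
    have := congrFun (hpt (fun _ => c)) i
    change w.left i c = c at this
    simpa using this
  have hfix : ∀ i, w.right⁻¹ i = i := by
    intro i
    by_contra hne
    have := congrFun (hpt (Pi.single i 1)) i
    rw [wAct_apply, hn] at this
    simp only [Pi.one_apply, Equiv.Perm.one_apply] at this
    rw [Pi.single_eq_same, Pi.single_eq_of_ne hne] at this
    exact zero_ne_one this
  have hh : w.right = 1 := by
    apply Equiv.ext
    intro i
    conv_lhs => rw [← hfix i]
    simp
  have hw' : w = ⟨w.left, w.right⟩ := rfl
  rw [hw', hn, hh]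
  rfl

/-! Decidable combinatorial facts about `(ℤ/3)³`. -/

lemma dir_unique : ∀ a b : GPt, a ≠ b → ∀ k k' : Fin 3,
    (∀ j, j ≠ k → a j = b j) → (∀ j, j ≠ k' → a j = b j) → k = k' := by decide

lemma triple_dir' : ∀ a b c : GPt, (Col a b ∧ Col a c ∧ Col b c) →
    ∃ k : Fin 3, (∀ j, j ≠ k → a j = b j) ∧ (∀ j, j ≠ k → a j = c j) := by decide

lemma triple_dir (a b c : GPt) (h1 : Col a b) (h2 : Col a c) (h3 : Col b c) :
    ∃ k : Fin 3, (∀ j, j ≠ k → a j = b j) ∧ (∀ j, j ≠ k → a j = c j) :=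
  triple_dir' a b c ⟨h1, h2, h3⟩

lemma col_zero_single : ∀ (k : Fin 3) (t : ZMod 3), t ≠ 0 → Col 0 (Pi.single k t) := by decide

lemma col_single_single : ∀ k : Fin 3, Col (Pi.single k (1 : ZMod 3)) (Pi.single k 2) := by decide

lemma single_one_inj : ∀ k k' : Fin 3,
    (Pi.single k 1 : GPt) = (Pi.single k' 1 : GPt) → k = k' := by decide

lemma not_col_single_single : ∀ k k' : Fin 3, k ≠ k' →
    ¬ Col (Pi.single k (1 : ZMod 3)) (Pi.single k' 1) := by decide

lemma single_inj : ∀ (k : Fin 3) (t s : ZMod 3),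
    (Pi.single k t : GPt) = (Pi.single k s : GPt) → t = s := by decide

lemma zmod3_cases : ∀ t : ZMod 3, t = 0 ∨ t = 1 ∨ t = 2 := by decide

lemma single0_eq : ∀ a : ZMod 3, (Pi.single (0 : Fin 3) a : GPt) = ![a, 0, 0] := by decide
lemma single1_eq : ∀ b : ZMod 3, (Pi.single (1 : Fin 3) b : GPt) = ![0, b, 0] := by decide
lemma single2_eq : ∀ c : ZMod 3, (Pi.single (2 : Fin 3) c : GPt) = ![0, 0, c] := by decide

lemma fact2_01 : ∀ a b : ZMod 3, a ≠ 0 → b ≠ 0 →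
    Col ![a,0,0] ![a,b,0] ∧ Col ![0,b,0] ![a,b,0] ∧ ![a,b,0] ≠ (0 : GPt) ∧
    ∀ z : GPt, Col ![a,0,0] z → Col ![0,b,0] z → z = ![a,b,0] ∨ z = 0 := by decide

lemma fact2_02 : ∀ a c : ZMod 3, a ≠ 0 → c ≠ 0 →
    Col ![a,0,0] ![a,0,c] ∧ Col ![0,0,c] ![a,0,c] ∧ ![a,0,c] ≠ (0 : GPt) ∧
    ∀ z : GPt, Col ![a,0,0] z → Col ![0,0,c] z → z = ![a,0,c] ∨ z = 0 := by decide

lemma fact2_12 : ∀ b c : ZMod 3, b ≠ 0 → c ≠ 0 →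
    Col ![0,b,0] ![0,b,c] ∧ Col ![0,0,c] ![0,b,c] ∧ ![0,b,c] ≠ (0 : GPt) ∧
    ∀ z : GPt, Col ![0,b,0] z → Col ![0,0,c] z → z = ![0,b,c] ∨ z = 0 := by decide

lemma fact3' : ∀ a b c : ZMod 3, (a ≠ 0 ∧ b ≠ 0 ∧ c ≠ 0) →
    Col ![a,b,0] ![a,b,c] ∧ Col ![a,0,c] ![a,b,c] ∧ ![a,b,c] ≠ ![a,0,0] ∧
    ∀ z : GPt, Col ![a,b,0] z → Col ![a,0,c] z → z = ![a,b,c] ∨ z = ![a,0,0] := by decide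

lemma fact3 (a b c : ZMod 3) (ha : a ≠ 0) (hb : b ≠ 0) (hc : c ≠ 0) :
    Col ![a,b,0] ![a,b,c] ∧ Col ![a,0,c] ![a,b,c] ∧ ![a,b,c] ≠ ![a,0,0] ∧
    ∀ z : GPt, Col ![a,b,0] z → Col ![a,0,c] z → z = ![a,b,c] ∨ z = ![a,0,0] :=
  fact3' a b c ⟨ha, hb, hc⟩

/-- A collinearity-preserving injection fixing the seven "axis" points is the identity. -/
lemma determined (r : GPt → GPt) (hinj : Function.Injective r)
    (hcol : ∀ u v, Col u v → Col (r u) (r v))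
    (hS : ∀ (k : Fin 3) (t : ZMod 3), r (Pi.single k t) = Pi.single k t) :
    ∀ x : GPt, r x = x := by
  have K : ∀ a b y₀ x : GPt, r a = a → r b = b → r y₀ = y₀ → Col a x → Col b x →
      (∀ z, Col a z → Col b z → z = x ∨ z = y₀) → x ≠ y₀ → r x = x := by
    intro a b y₀ x ha hb hy h1 h2 hu hxy
    rcases hu (r x) (ha ▸ hcol a x h1) (hb ▸ hcol b x h2) with h | h
    · exact h
    · exact absurd (hinj (h.trans hy.symm)) hxy
  have h0 : r 0 = 0 := by
    have := hS 0 0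
    simpa using this
  have hS0 : ∀ a : ZMod 3, r ![a,0,0] = ![a,0,0] := fun a => by
    rw [← single0_eq]; exact hS 0 a
  have hS1 : ∀ b : ZMod 3, r ![0,b,0] = ![0,b,0] := fun b => by
    rw [← single1_eq]; exact hS 1 b
  have hS2 : ∀ c : ZMod 3, r ![0,0,c] = ![0,0,c] := fun c => by
    rw [← single2_eq]; exact hS 2 c
  have f01 : ∀ a b : ZMod 3, a ≠ 0 → b ≠ 0 → r ![a,b,0] = ![a,b,0] := by
    intro a b ha hb
    obtain ⟨c1, c2, hne, hu⟩ := fact2_01 a b ha hb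
    exact K ![a,0,0] ![0,b,0] 0 ![a,b,0] (hS0 a) (hS1 b) h0 c1 c2 hu hne
  have f02 : ∀ a c : ZMod 3, a ≠ 0 → c ≠ 0 → r ![a,0,c] = ![a,0,c] := by
    intro a c ha hc
    obtain ⟨c1, c2, hne, hu⟩ := fact2_02 a c ha hc
    exact K ![a,0,0] ![0,0,c] 0 ![a,0,c] (hS0 a) (hS2 c) h0 c1 c2 hu hne
  have f12 : ∀ b c : ZMod 3, b ≠ 0 → c ≠ 0 → r ![0,b,c] = ![0,b,c] := by
    intro b c hb hc
    obtain ⟨c1, c2, hne, hu⟩ := fact2_12 b c hb hc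
    exact K ![0,b,0] ![0,0,c] 0 ![0,b,c] (hS1 b) (hS2 c) h0 c1 c2 hu hne
  have f3 : ∀ a b c : ZMod 3, a ≠ 0 → b ≠ 0 → c ≠ 0 → r ![a,b,c] = ![a,b,c] := by
    intro a b c ha hb hc
    obtain ⟨c1, c2, hne, hu⟩ := fact3 a b c ha hb hc
    exact K ![a,b,0] ![a,0,c] ![a,0,0] ![a,b,c] (f01 a b ha hb) (f02 a c ha hc)
      (hS0 a) c1 c2 hu hne
  intro x
  have hx : x = ![x 0, x 1, x 2] := by
    funext j
    fin_cases j <;> rfl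
  rw [hx]
  by_cases ha : x 0 = 0 <;> by_cases hb : x 1 = 0 <;> by_cases hc : x 2 = 0
  · rw [ha, hb, hc]; rw [show ![(0:ZMod 3),0,0] = (0 : GPt) by decide]; exact h0
  · rw [ha, hb]; rw [← single2_eq]; exact hS 2 _
  · rw [ha, hc]; rw [← single1_eq]; exact hS 1 _
  · rw [ha]; exact f12 _ _ hb hc
  · rw [hb, hc]; rw [← single0_eq]; exact hS 0 _
  · rw [hb]; exact f02 _ _ ha hc
  · rw [hc]; exact f01 _ _ ha hb
  · exact f3 _ _ _ ha hb hc

lemma wAct_col (n : Fin 3 → Equiv.Perm (Fin 3)) (h : Equiv.Perm (Fin 3)) {u v : GPt}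
    (hc : Col u v) : Col (wAct n h u) (wAct n h v) := by
  obtain ⟨hne, k, hk⟩ := hc
  refine ⟨fun he => hne ((wAct n h).injective he), h k, fun j hj => ?_⟩
  rw [wAct_apply, wAct_apply]
  congr 1
  apply hk
  intro he
  exact hj (by rw [← he]; exact (h.apply_symm_apply j).symm)

lemma Phi_surjective : Function.Surjective Phi := by
  rintro ⟨σ, hσ⟩
  have hinl : ∀ v : GPt, ∃ u, σ (Sum.inl v) = Sum.inl u := by
    intro v
    rcases h : σ (Sum.inl v) with u | m
    · exact ⟨u, rfl⟩
    · exfalso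
      have hpp : PP (σ (Sum.inl v)) := h ▸ PP_inr m
      rw [PP_iff hσ] at hpp
      exact not_PP_inl v hpp
  have hinr : ∀ ℓ : GrayLine, ∃ m, σ (Sum.inr ℓ) = Sum.inr m := by
    intro ℓ
    rcases h : σ (Sum.inr ℓ) with u | m
    · exfalso
      have hpp : PP (σ (Sum.inr ℓ)) := by rw [PP_iff hσ]; exact PP_inr ℓ
      rw [h] at hpp
      exact not_PP_inl u hpp
    · exact ⟨m, rfl⟩
  choose p hp using hinl
  have hpinj : Function.Injective p := by
    intro a b h
    exact Sum.inl.inj (σ.injective (by rw [hp a, hp b, h] : σ (Sum.inl a) = σ (Sum.inl b)))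
  have hcol_iff : ∀ u v : GPt, (u = v ∨ Col u v) ↔ (p u = p v ∨ Col (p u) (p v)) := by
    intro u v
    rw [← common_inl_iff, ← common_inl_iff, ← hp u, ← hp v, common_map hσ]
  have hColp : ∀ u v, Col u v → Col (p u) (p v) := by
    intro u v h
    rcases (hcol_iff u v).mp (Or.inr h) with he | hc
    · exact absurd (hpinj he) h.1
    · exact hc
  have hColp' : ∀ u v, Col (p u) (p v) → Col u v := by
    intro u v h
    rcases (hcol_iff u v).mpr (Or.inr h) with he | hc
    · exact absurd (congrArg p he) h.1
    · exact hc
  have key : ∀ k : Fin 3, ∃ m : Fin 3, ∀ (t : ZMod 3) (j : Fin 3), j ≠ m →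
      p (Pi.single k t) j = p 0 j := by
    intro k
    have h1 : Col (p 0) (p (Pi.single k 1)) := hColp 0 _ (col_zero_single k 1 (by decide))
    have h2 : Col (p 0) (p (Pi.single k 2)) := hColp 0 _ (col_zero_single k 2 (by decide))
    have h3 : Col (p (Pi.single k 1)) (p (Pi.single k 2)) := hColp _ _ (col_single_single k)
    obtain ⟨m, hm1, hm2⟩ := triple_dir (p 0) _ _ h1 h2 h3
    refine ⟨m, fun t j hj => ?_⟩
    rcases zmod3_cases t with rfl | rfl | rfl
    · rw [show (Pi.single k (0 : ZMod 3) : GPt) = 0 from by simp]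
    · exact (hm1 j hj).symm
    · exact (hm2 j hj).symm
  choose d hd using key
  have hdinj : Function.Injective d := by
    intro k k' he
    by_contra hne
    have hnep : p (Pi.single k 1) ≠ p (Pi.single k' 1) :=
      fun h => hne (single_one_inj k k' (hpinj h))
    have hcc : Col (p (Pi.single k 1)) (p (Pi.single k' 1)) := by
      refine ⟨hnep, d k, fun j hj => ?_⟩
      rw [hd k 1 j hj, ← hd k' 1 j (he ▸ hj)]
    exact not_col_single_single k k' hne (hColp' _ _ hcc)
  let π : Equiv.Perm (Fin 3) := Equiv.ofBijective d (Finite.injective_iff_bijective.mp hdinj)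
  have hπ : ∀ k, π k = d k := fun k => rfl
  have hginj : ∀ i : Fin 3,
      Function.Injective fun t : ZMod 3 => p (Pi.single (π.symm i) t) i := by
    intro i t s hts
    have hdk : d (π.symm i) = i := by rw [← hπ]; exact π.apply_symm_apply i
    have hps : p (Pi.single (π.symm i) t) = p (Pi.single (π.symm i) s) := by
      funext j
      by_cases hj : j = i
      · subst hj; exact hts
      · rw [hd _ t j (fun he => hj (he.trans hdk)), hd _ s j (fun he => hj (he.trans hdk))]
    exact single_inj _ t s (hpinj hps)
  let g : Fin 3 → Equiv.Perm (ZMod 3) := fun i =>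
    Equiv.ofBijective _ (Finite.injective_iff_bijective.mp (hginj i))
  let w₀ : W := ⟨fun i => g i, π⟩
  have hagree : ∀ (k : Fin 3) (t : ZMod 3),
      wAct w₀.left w₀.right (Pi.single k t) = p (Pi.single k t) := by
    intro k t
    funext i
    rw [wAct_apply]
    have hwr : w₀.right = π := rfl
    have hwl : ∀ j, w₀.left j = g j := fun _ => rfl
    rw [hwr, hwl]
    by_cases hi : i = π k
    · subst hi
      rw [show (π⁻¹ : Equiv.Perm (Fin 3)) (π k) = k from π.symm_apply_apply k,
        Pi.single_eq_same]
      show p (Pi.single (π.symm (π k)) t) (π k) = p (Pi.single k t) (π k)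
      rw [π.symm_apply_apply]
    · have h1 : (π⁻¹ : Equiv.Perm (Fin 3)) i ≠ k :=
        fun he => hi (by rw [← he]; exact (π.apply_symm_apply i).symm)
      rw [Pi.single_eq_of_ne h1]
      have h2 : p (Pi.single k t) i = p 0 i :=
        hd k t i (fun he => hi (he.trans (hπ k).symm))
      rw [h2]
      show p (Pi.single (π.symm i) 0) i = p 0 i
      rw [show (Pi.single (π.symm i) (0 : ZMod 3) : GPt) = 0 from by simp]
  have hfinal : ∀ x : GPt, p x = wAct w₀.left w₀.right x := by
    set r : GPt → GPt := fun x => (wAct w₀.left w₀.right).symm (p x) with hr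
    have hrinj : Function.Injective r :=
      fun a b h => hpinj ((wAct w₀.left w₀.right).symm.injective h)
    have hrcol : ∀ u v, Col u v → Col (r u) (r v) := by
      intro u v h
      rw [hr]
      simp only
      rw [wAct_symm]
      exact wAct_col _ _ (hColp u v h)
    have hrS : ∀ (k : Fin 3) (t : ZMod 3), r (Pi.single k t) = Pi.single k t := by
      intro k t
      rw [hr]
      simp only
      rw [← hagree k t]
      exact (wAct w₀.left w₀.right).symm_apply_apply _
    intro x
    have hdet := determined r hrinj hrcol hrS x
    rw [hr] at hdet
    simp only at hdet
    exact ((wAct w₀.left w₀.right).symm_apply_eq).mp hdet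
  refine ⟨w₀, ?_⟩
  apply Subtype.ext
  apply Equiv.ext
  rintro (v | ℓ)
  · show graphPerm w₀ (Sum.inl v) = σ (Sum.inl v)
    rw [hp v]
    simp only [graphPerm, Equiv.sumCongr_apply, Sum.map_inl]
    rw [← hfinal v]
  · obtain ⟨m, hm⟩ := hinr ℓ
    show graphPerm w₀ (Sum.inr ℓ) = σ (Sum.inr ℓ)
    rw [hm]
    simp only [graphPerm, Equiv.sumCongr_apply, Sum.map_inr]
    congr 1
    apply Subtype.ext
    ext u
    have hmem : ∀ v : GPt, v ∈ ℓ.1 ↔ p v ∈ m.1 := by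
      intro v
      rw [← adj_inl_inr, ← adj_inl_inr, ← hp v, ← hm]
      exact (hσ _ _).symm
    show u ∈ ((lineMap w₀.left w₀.right) ℓ).1 ↔ u ∈ m.1
    rw [mem_lineMap, hmem ((wAct w₀.left w₀.right).symm u), hfinal,
      Equiv.apply_symm_apply]

end GrayProof

theorem aut_grayGraph_iso_wreath :
    Nonempty (grayAut ≃*
      SemidirectProduct (Fin 3 → Equiv.Perm (Fin 3)) (Equiv.Perm (Fin 3)) permuteFactors) :=
  ⟨(MulEquiv.ofBijective GrayProof.Phi
      ⟨GrayProof.Phi_injective, GrayProof.Phi_surjective⟩).symm⟩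
end
end

section
/- Let m ≥ 3 be an integer, r > 0, φ ∈ ℝ, and for i ∈ ℤ let P_i = r·(cos(2πi/m + φ), sin(2πi/m + φ)), the vertices of a regular m-gon centered at the origin O = (0,0). Let b and d be integers such that P_b, O and P_{b−d} are not collinear, and let 𝒞 be the circle through these three points. If Q ∈ 𝒞 and Q' is the image of Q under the counterclockwise rotation by 2πd/m about O, then the three points P_b, Q and Q' are collinear. -/
/- STATEMENT 10 (Configuration Construction Lemma): Let P_i be the vertices of a regular
m-gon of radius r centered at the origin O, let b, d be integers such that P_b, O and
P_{b-d} are not collinear, and let 𝒞 be the circle through these three points. If Q ∈ 𝒞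
and Q' is the rotate of Q by 2πd/m about O, then P_b, Q and Q' are collinear. -/

open Real

noncomputable section

/-- If the cross product of `B - A` and `C - A` vanishes, the three points are collinear. -/
lemma collinear_of_cross_s10 (A B C : Pt)
    (h : (B 0 - A 0) * (C 1 - A 1) - (B 1 - A 1) * (C 0 - A 0) = 0) :
    Collinear ℝ ({A, B, C} : Set Pt) := by
  by_cases hB : B = A
  · have hset : ({A, B, C} : Set Pt) = {A, C} := by rw [hB]; simp
    rw [hset]; exact collinear_pair ℝ A C
  · rw [collinear_iff_of_mem (Set.mem_insert A {B, C})]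
    refine ⟨B - A, ?_⟩
    intro p' hp'
    have hcomp : ∀ k : ℝ, p' 0 = k * (B 0 - A 0) + A 0 → p' 1 = k * (B 1 - A 1) + A 1 →
        p' = k • (B - A) +ᵥ A := by
      intro k hk0 hk1
      ext i
      simp only [vadd_eq_add, PiLp.add_apply, PiLp.smul_apply, PiLp.sub_apply,
        smul_eq_mul]
      fin_cases i
      · exact hk0
      · exact hk1
    rcases hp' with rfl | rfl | rfl
    · exact ⟨0, hcomp 0 (by ring) (by ring)⟩
    · exact ⟨1, hcomp 1 (by ring) (by ring)⟩
    · have hne : B 0 ≠ A 0 ∨ B 1 ≠ A 1 := by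
        by_contra hcon
        push_neg at hcon
        exact hB (by ext i; fin_cases i <;> simp [hcon.1, hcon.2])
      rcases hne with h0 | h1
      · have hd : B 0 - A 0 ≠ 0 := sub_ne_zero.mpr h0
        refine ⟨(p' 0 - A 0) / (B 0 - A 0), hcomp _ ?_ ?_⟩
        · rw [div_mul_eq_mul_div, mul_div_assoc, div_self hd, mul_one]; ring
        · rw [← sub_eq_iff_eq_add, div_mul_eq_mul_div, eq_comm, div_eq_iff hd]
          linear_combination -h
      · have hd : B 1 - A 1 ≠ 0 := sub_ne_zero.mpr h1
        refine ⟨(p' 1 - A 1) / (B 1 - A 1), hcomp _ ?_ ?_⟩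
        · rw [← sub_eq_iff_eq_add, div_mul_eq_mul_div, eq_comm, div_eq_iff hd]
          linear_combination h
        · rw [div_mul_eq_mul_div, mul_div_assoc, div_self hd, mul_one]; ring

/-- Membership in a sphere in the plane, in coordinates. -/
lemma sphere_eq (z c : Pt) (rad : ℝ) (hz : z ∈ Metric.sphere c rad) :
    (z 0 - c 0)^2 + (z 1 - c 1)^2 = rad^2 := by
  rw [Metric.mem_sphere, EuclideanSpace.dist_eq, Fin.sum_univ_two] at hz
  have h0 : (0:ℝ) ≤ dist (z 0) (c 0)^2 + dist (z 1) (c 1)^2 := by positivity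
  have h := Real.sq_sqrt h0
  rw [hz] at h
  simp only [Real.dist_eq, sq_abs] at h
  linarith

theorem configuration_construction_lemma
    (m : ℤ) (hm : 3 ≤ m) (r : ℝ) (hr : 0 < r) (φ : ℝ)
    (P : ℤ → Pt)
    (hP : ∀ i : ℤ, P i =
      pt (r * Real.cos (2 * π * i / m + φ)) (r * Real.sin (2 * π * i / m + φ)))
    (b d : ℤ)
    (hncol : ¬ Collinear ℝ ({P b, pt 0 0, P (b - d)} : Set Pt))
    (ctr : Pt) (rad : ℝ)
    (h1 : P b ∈ Metric.sphere ctr rad)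
    (h2 : pt 0 0 ∈ Metric.sphere ctr rad)
    (h3 : P (b - d) ∈ Metric.sphere ctr rad)
    (Q : Pt) (hQ : Q ∈ Metric.sphere ctr rad) :
    Collinear ℝ ({P b, Q, rotAbout (2 * π * d / m) (pt 0 0) Q} : Set Pt) := by
  set θ : ℝ := 2 * π * b / m + φ with hθ
  set α : ℝ := 2 * π * d / m with hα
  set s : ℝ := Real.sin α with hs
  set t : ℝ := Real.cos α with ht
  set c1 : ℝ := ctr 0
  set c2 : ℝ := ctr 1
  set x : ℝ := Q 0
  set y : ℝ := Q 1
  set p1 : ℝ := r * Real.cos θ with hp1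
  set p2 : ℝ := r * Real.sin θ with hp2
  -- coordinates of P b
  have hPb0 : P b 0 = p1 := by rw [hP b]; rfl
  have hPb1 : P b 1 = p2 := by rw [hP b]; rfl
  -- angle of P (b - d)
  have hang : 2 * π * ((b - d : ℤ) : ℝ) / m + φ = θ - α := by
    rw [hθ, hα]; push_cast; ring
  have hq0 : P (b - d) 0 = t * p1 + s * p2 := by
    rw [hP (b - d)]
    show r * Real.cos (2 * π * ((b - d : ℤ) : ℝ) / m + φ) = _
    rw [hang, Real.cos_sub]; ring
  have hq1 : P (b - d) 1 = t * p2 - s * p1 := by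
    rw [hP (b - d)]
    show r * Real.sin (2 * π * ((b - d : ℤ) : ℝ) / m + φ) = _
    rw [hang, Real.sin_sub]; ring
  have pyth : s^2 + t^2 = 1 := Real.sin_sq_add_cos_sq α
  have pr : p1^2 + p2^2 = r^2 := by rw [hp1, hp2]; nlinarith [Real.sin_sq_add_cos_sq θ]
  -- sphere equations
  have eA : (p1 - c1)^2 + (p2 - c2)^2 = rad^2 := by
    have := sphere_eq _ _ _ h1; rwa [hPb0, hPb1] at this
  have eO : c1^2 + c2^2 = rad^2 := by
    have := sphere_eq _ _ _ h2
    simpa [pt] using this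
  have eB : (t * p1 + s * p2 - c1)^2 + (t * p2 - s * p1 - c2)^2 = rad^2 := by
    have := sphere_eq _ _ _ h3; rwa [hq0, hq1] at this
  have eC : (x - c1)^2 + (y - c2)^2 = rad^2 := sphere_eq _ _ _ hQ
  have hr2 : (r:ℝ)^2 ≠ 0 := pow_ne_zero 2 hr.ne'
  -- solve for the center of the circle
  have H1 : (2 * s * c1) * r^2 = (s * p1 + (1 - t) * p2) * r^2 := by
    linear_combination (p2 - (s*p1 + (1-t)*p2)) * eA - p2 * eB
      + (s*p1 + (1-t)*p2) * eO + p2 * (p1^2 + p2^2) * pyth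
      + ((s*p1 + (1-t)*p2) - 2*s*c1) * pr
  have H2 : (2 * s * c2) * r^2 = (s * p2 - (1 - t) * p1) * r^2 := by
    linear_combination (-(s*p2 - (1-t)*p1) - p1) * eA + p1 * eB
      + (s*p2 - (1-t)*p1) * eO - p1 * (p1^2 + p2^2) * pyth
      + ((s*p2 - (1-t)*p1) - 2*s*c2) * pr
  have hc1 : 2 * s * c1 = s * p1 + (1 - t) * p2 := mul_right_cancel₀ hr2 H1
  have hc2 : 2 * s * c2 = s * p2 - (1 - t) * p1 := mul_right_cancel₀ hr2 H2
  -- conclude via the vanishing cross product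
  apply collinear_of_cross_s10
  have hrot0 : rotAbout α (pt 0 0) Q 0 = t * x - s * y := by
    show (0:ℝ) + t * (x - 0) - s * (y - 0) = _
    ring
  have hrot1 : rotAbout α (pt 0 0) Q 1 = s * x + t * y := by
    show (0:ℝ) + s * (x - 0) + t * (y - 0) = _
    ring
  rw [hPb0, hPb1, hrot0, hrot1]
  linear_combination s * eC - s * eO + x * hc1 + y * hc2
end
end

section
/- The circumcenter of the three points D₋₁, D₋₃ and the origin O is the point (0, 1/(2·cos(2π/9))); consequently, a point (x,y) ∈ ℝ² lies on the circle 𝒞 if and only if x² + y² − y/cos(2π/9) = 0. -/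
/- STATEMENT 11: The circumcenter of D₋₁, D₋₃ and the origin O is (0, 1/(2·cos(2π/9)));
consequently a point (x,y) lies on the circle 𝒞 through these three points if and only if
x² + y² − y/cos(2π/9) = 0. -/

open Real

noncomputable section

/-- The claimed circumcenter. -/
def ctr : Pt := pt 0 (1 / (2 * Real.cos (2 * π / 9)))

lemma dist_pt (a b a' b' : ℝ) :
    dist (pt a b) (pt a' b') = Real.sqrt ((a - a')^2 + (b - b')^2) := by
  rw [EuclideanSpace.dist_eq]
  simp [pt, Fin.sum_univ_two, Real.dist_eq, sq_abs]

lemma pt_eta (p : Pt) : p = pt (p 0) (p 1) := by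
  ext i; fin_cases i <;> simp [pt]

lemma ang1 : 2 * π * ((-1 : ℤ) : ℝ) / 9 + 17 * π / 18 = π / 2 + 2 * π / 9 := by
  push_cast; ring

lemma ang3 : 2 * π * ((-3 : ℤ) : ℝ) / 9 + 17 * π / 18 = π / 2 - 2 * π / 9 := by
  push_cast; ring

lemma D1_eq : D (-1) = pt (-(Real.sin (2 * π / 9))) (Real.cos (2 * π / 9)) := by
  unfold D
  rw [ang1, Real.cos_add, Real.sin_add, Real.cos_pi_div_two, Real.sin_pi_div_two]
  ring_nf

lemma D3_eq : D (-3) = pt (Real.sin (2 * π / 9)) (Real.cos (2 * π / 9)) := by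
  unfold D
  rw [ang3, Real.cos_pi_div_two_sub, Real.sin_pi_div_two_sub]

lemma hc_pos : 0 < Real.cos (2 * π / 9) := by
  apply Real.cos_pos_of_mem_Ioo
  constructor <;> nlinarith [pi_pos]

theorem circumcenter_and_circle_equation :
    -- ctr is equidistant from D₋₁, D₋₃ and O, hence is the circumcenter ...
    (dist ctr (D (-1)) = dist ctr O ∧ dist ctr (D (-3)) = dist ctr O) ∧
    -- ... and it is the unique such point:
    (∀ c : Pt, dist c (D (-1)) = dist c O → dist c (D (-3)) = dist c O → c = ctr) ∧
    -- consequently, (x,y) lies on the circle 𝒞 through D₋₁, D₋₃, O iff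
    -- x² + y² − y/cos(2π/9) = 0:
    (∀ x y : ℝ, dist (pt x y) ctr = dist O ctr ↔
      x ^ 2 + y ^ 2 - y / Real.cos (2 * π / 9) = 0) := by
  set s := Real.sin (2 * π / 9) with hs
  set c := Real.cos (2 * π / 9) with hcc
  have hc : 0 < c := hc_pos
  have hpy : s ^ 2 + c ^ 2 = 1 := Real.sin_sq_add_cos_sq _
  set k : ℝ := 1 / (2 * c) with hk
  have hck : 2 * c * k = 1 := by rw [hk]; field_simp [hc.ne']
  have hO : O = pt 0 0 := rfl
  have hctr : ctr = pt 0 k := rfl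
  refine ⟨⟨?_, ?_⟩, ?_, ?_⟩
  · rw [D1_eq, hO, hctr, dist_pt, dist_pt]
    congr 1; nlinarith
  · rw [D3_eq, hO, hctr, dist_pt, dist_pt]
    congr 1; nlinarith
  · intro p h1 h3
    rw [pt_eta p] at h1 h3 ⊢
    set a := p 0; set b := p 1
    rw [D1_eq, hO, dist_pt, dist_pt] at h1
    rw [D3_eq, hO, dist_pt, dist_pt] at h3
    rw [Real.sqrt_inj (by positivity) (by positivity)] at h1 h3
    have hs0 : 0 < s := by
      rw [hs]; apply Real.sin_pos_of_pos_of_lt_pi <;> nlinarith [pi_pos]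
    have ha : a = 0 := by nlinarith
    have hb : b = k := by
      have : s ^ 2 + c ^ 2 - 2 * b * c = 0 := by nlinarith
      rw [hk]; field_simp; nlinarith
    rw [hctr, ha, hb]
  · intro x y
    rw [hO, hctr, dist_pt, dist_pt,
      Real.sqrt_inj (by positivity) (by positivity)]
    have key : y / c = 2 * k * y := by rw [hk]; field_simp
    constructor
    · intro h
      linear_combination h - key
    · intro h
      linear_combination h + key
end
end

section
/- For every t ∈ ℝ, let F₀(t) = (1−t)·D₀ + t·D₁ (a variable point on the line L₀) and let N₀(t) be the line through F₀(t) and R(F₀(t)). Then N₀(t) meets the parabola 𝒫 in exactly one point; that is, every line N₀(t) is tangent to the parabola with focus O and directrix y = −2s. -/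
/- STATEMENT 13: With F₀(t) = (1−t)·D₀ + t·D₁ on L₀ and N₀(t) the line through F₀(t) and
its rotate R(F₀(t)) by 8π/9 about the origin, every line N₀(t) meets the parabola
𝒫 = {(x,y) : x² = 4sy + 4s²} (focus O, directrix y = −2s) in exactly one point,
i.e. is tangent to 𝒫. -/

open Real

noncomputable section

/-- The constant s = sin(π/18)·cos(π/9). -/
def s : ℝ := Real.sin (π / 18) * Real.cos (π / 9)

/-- The parabola x² = 4sy + 4s², with focus the origin and directrix y = −2s. -/
def parab : Set Pt := {p : Pt | (p 0) ^ 2 = 4 * s * (p 1) + 4 * s ^ 2}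

/-- Auxiliary: the tangency discriminant identity, as a polynomial identity. -/
lemma disc_eq_aux (sa ca t fx fy rx ry sv dx dy : ℝ) (h1 : sa^2 + ca^2 = 1)
    (hfx : fx = (1-t)*(-ca) + t*(-(4*ca^3-3*ca)))
    (hfy : fy = (1-t)*sa + t*(-(3*sa-4*sa^3)))
    (hrx : rx = -(2*ca^2-1)*fx - 2*sa*ca*fy)
    (hry : ry = 2*sa*ca*fx + -(2*ca^2-1)*fy)
    (hsv : sv = sa*(2*ca^2-1))
    (hdx : dx = rx - fx) (hdy : dy = ry - fy) :
    (2*fx*dx - 4*sv*dy)^2 = 4*dx^2*(fx^2 - 4*sv*fy - 4*sv^2) := by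
  subst hdx hdy hrx hry hfx hfy hsv
  linear_combination ((-128)*sa^2*ca^6 + (1280)*sa^2*ca^6*t^1 + (-4096)*sa^2*ca^6*t^2 + (4096)*sa^2*ca^6*t^3 + (256)*sa^2*ca^8 + (-3584)*sa^2*ca^8*t^1 + (14336)*sa^2*ca^8*t^2 + (-16384)*sa^2*ca^8*t^3 + (2048)*sa^2*ca^10*t^1 + (-14336)*sa^2*ca^10*t^2 + (20480)*sa^2*ca^10*t^3 + (4096)*sa^2*ca^12*t^2 + (-8192)*sa^2*ca^12*t^3 + (-128)*sa^4*ca^4 + (1024)*sa^4*ca^4*t^1 + (-2048)*sa^4*ca^4*t^2 + (256)*sa^4*ca^6 + (-2048)*sa^4*ca^6*t^1 + (2048)*sa^4*ca^6*t^2 + (8192)*sa^4*ca^6*t^3 + (4096)*sa^4*ca^8*t^2 + (-20480)*sa^4*ca^8*t^3 + (8192)*sa^4*ca^10*t^3 + (-256)*sa^6*ca^2*t^1 + (2048)*sa^6*ca^2*t^2 + (-4096)*sa^6*ca^2*t^3 + (-512)*sa^6*ca^4*t^1 + (2048)*sa^6*ca^4*t^2 + (2048)*sa^6*ca^6*t^1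 + (-12288)*sa^6*ca^6*t^2 + (16384)*sa^6*ca^6*t^3 + (-2048)*sa^8*ca^2*t^2 + (8192)*sa^8*ca^2*t^3 + (2048)*sa^8*ca^4*t^2 + (-12288)*sa^8*ca^4*t^3 + (4096)*sa^8*ca^6*t^2 + (-8192)*sa^8*ca^6*t^3 + (-4096)*sa^10*ca^2*t^3 + (8192)*sa^10*ca^4*t^3) * h1

/-- Auxiliary: the x-component of the chord direction is constant. -/
lemma dx_eq_aux (sa ca t fx fy rx dx : ℝ) (h1 : sa^2 + ca^2 = 1)
    (hfx : fx = (1-t)*(-ca) + t*(-(4*ca^3-3*ca)))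
    (hfy : fy = (1-t)*sa + t*(-(3*sa-4*sa^3)))
    (hrx : rx = -(2*ca^2-1)*fx - 2*sa*ca*fy)
    (hdx : dx = rx - fx) :
    dx = 2*ca*(2*ca^2-1) := by
  subst hdx hrx hfx hfy
  linear_combination ((-2)*ca^1 + (8)*ca^3*t^1 + (-8)*sa^2*ca^1*t^1) * h1

/-- Auxiliary: unique root of a quadratic with zero discriminant. -/
lemma quad_root_aux (A B C u u₀ : ℝ) (hA : A ≠ 0) (hd : B^2 = 4*A*C)
    (hu : u₀ = -B/(2*A)) : A*u^2 + B*u + C = 0 ↔ u = u₀ := by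
  have hBu : 2*A*u₀ = -B := by rw [hu]; field_simp
  have key2 : (4*A)*(A*u₀^2) = (4*A)*C := by linear_combination hd + (2*A*u₀ - B)*hBu
  have hC : A*u₀^2 = C := mul_left_cancel₀ (by positivity) key2
  constructor
  · intro h
    have key : (2*A*u + B)^2 = 0 := by linear_combination 4*A*h + hd
    have h2 : 2*A*u + B = 0 := by
      exact pow_eq_zero_iff (two_ne_zero) |>.mp key
    rw [hu]; field_simp; linear_combination h2
  · intro h
    rw [h]
    linear_combination u₀*hBu - hC

theorem N0_tangent_to_parabola (t : ℝ) : ∃! X : Pt, X ∈ N₀ t ∩ parab := by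
  have hπ := Real.pi_pos
  set sa := Real.sin (π/18) with hsa
  set ca := Real.cos (π/18) with hca
  have h1 : sa^2 + ca^2 = 1 := Real.sin_sq_add_cos_sq _
  have hcapos : 0 < ca := by
    rw [hca]; apply Real.cos_pos_of_mem_Ioo
    constructor <;> nlinarith
  have hc2pos : 0 < 2*ca^2 - 1 := by
    have h2 : Real.cos (2*(π/18)) = 2*ca^2 - 1 := by rw [Real.cos_two_mul, hca]
    rw [← h2]; apply Real.cos_pos_of_mem_Ioo
    constructor <;> nlinarith
  have hcos8 : Real.cos (8*π/9) = -(2*ca^2-1) := by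
    rw [show (8*π/9 : ℝ) = π - 2*(π/18) by ring, Real.cos_pi_sub]
    rw [Real.cos_two_mul, hca]
  have hsin8 : Real.sin (8*π/9) = 2*sa*ca := by
    rw [show (8*π/9 : ℝ) = π - 2*(π/18) by ring, Real.sin_pi_sub, Real.sin_two_mul, hsa, hca]
  have e0x : D 0 0 = -ca := by
    show Real.cos (2 * π * ((0:ℤ):ℝ) / 9 + 17 * π / 18) = -ca
    rw [show (2 * π * ((0:ℤ):ℝ) / 9 + 17 * π / 18) = π - π/18 by push_cast; ring,
      Real.cos_pi_sub, hca]
  have e0y : D 0 1 = sa := by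
    show Real.sin (2 * π * ((0:ℤ):ℝ) / 9 + 17 * π / 18) = sa
    rw [show (2 * π * ((0:ℤ):ℝ) / 9 + 17 * π / 18) = π - π/18 by push_cast; ring,
      Real.sin_pi_sub, hsa]
  have e1x : D 1 0 = -(4*ca^3-3*ca) := by
    show Real.cos (2 * π * ((1:ℤ):ℝ) / 9 + 17 * π / 18) = -(4*ca^3-3*ca)
    rw [show (2 * π * ((1:ℤ):ℝ) / 9 + 17 * π / 18) = π + 3*(π/18) by push_cast; ring]
    rw [Real.cos_add, Real.cos_pi, Real.sin_pi, Real.cos_three_mul, hca]; ring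
  have e1y : D 1 1 = -(3*sa-4*sa^3) := by
    show Real.sin (2 * π * ((1:ℤ):ℝ) / 9 + 17 * π / 18) = -(3*sa-4*sa^3)
    rw [show (2 * π * ((1:ℤ):ℝ) / 9 + 17 * π / 18) = π + 3*(π/18) by push_cast; ring]
    rw [Real.sin_add, Real.cos_pi, Real.sin_pi, Real.sin_three_mul, hsa]; ring
  have hsv : s = sa*(2*ca^2-1) := by
    rw [s, show (π/9 : ℝ) = 2*(π/18) by ring, Real.cos_two_mul, hsa, hca]
  have hfx : F₀ t 0 = (1-t)*(-ca) + t*(-(4*ca^3-3*ca)) := by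
    simp only [F₀, PiLp.add_apply, PiLp.smul_apply, smul_eq_mul, e0x, e1x]
  have hfy : F₀ t 1 = (1-t)*sa + t*(-(3*sa-4*sa^3)) := by
    simp only [F₀, PiLp.add_apply, PiLp.smul_apply, smul_eq_mul, e0y, e1y]
  set RF : Pt := rotAbout (8*π/9) O (F₀ t) with hRF
  have hrx : RF 0 = -(2*ca^2-1)*(F₀ t 0) - 2*sa*ca*(F₀ t 1) := by
    show (0:ℝ) + Real.cos (8*π/9) * (F₀ t 0 - 0) - Real.sin (8*π/9) * (F₀ t 1 - 0) = _
    rw [hcos8, hsin8]; ring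
  have hry : RF 1 = 2*sa*ca*(F₀ t 0) + -(2*ca^2-1)*(F₀ t 1) := by
    show (0:ℝ) + Real.sin (8*π/9) * (F₀ t 0 - 0) + Real.cos (8*π/9) * (F₀ t 1 - 0) = _
    rw [hcos8, hsin8]; ring
  have hdxv : RF 0 - F₀ t 0 = 2*ca*(2*ca^2-1) :=
    dx_eq_aux sa ca t _ _ _ _ h1 hfx hfy hrx rfl
  have hdisc : (2*(F₀ t 0)*(RF 0 - F₀ t 0) - 4*s*(RF 1 - F₀ t 1))^2
      = 4*(RF 0 - F₀ t 0)^2*((F₀ t 0)^2 - 4*s*(F₀ t 1) - 4*s^2) :=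
    disc_eq_aux sa ca t _ _ _ _ s _ _ h1 hfx hfy hrx hry hsv rfl rfl
  set A : ℝ := (RF 0 - F₀ t 0)^2 with hAdef
  set B : ℝ := 2*(F₀ t 0)*(RF 0 - F₀ t 0) - 4*s*(RF 1 - F₀ t 1) with hBdef
  set C : ℝ := (F₀ t 0)^2 - 4*s*(F₀ t 1) - 4*s^2 with hCdef
  have hA : A ≠ 0 := by
    rw [hAdef, hdxv]; positivity
  have hd : B^2 = 4*A*C := by rw [hAdef, hBdef, hCdef]; linear_combination hdisc
  set u₀ : ℝ := -B/(2*A) with hu₀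
  have hquad := fun u => quad_root_aux A B C u u₀ hA hd hu₀
  have hcomp : ∀ (u : ℝ) (i : Fin 2), (F₀ t + u • (RF - F₀ t)) i = F₀ t i + u * (RF i - F₀ t i) := by
    intro u i
    simp [PiLp.add_apply, PiLp.smul_apply, PiLp.sub_apply]
  have hmem : ∀ (u : ℝ), (F₀ t + u • (RF - F₀ t)) ∈ parab ↔ u = u₀ := by
    intro u
    rw [← hquad u]
    show ((F₀ t + u • (RF - F₀ t)) 0)^2 = 4*s*((F₀ t + u • (RF - F₀ t)) 1) + 4*s^2 ↔ _
    rw [hcomp u 0, hcomp u 1]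
    constructor
    · intro h
      rw [hAdef, hBdef, hCdef]; linear_combination h
    · intro h
      rw [hAdef, hBdef, hCdef] at h; linear_combination h
  refine ⟨F₀ t + u₀ • (RF - F₀ t), ⟨⟨u₀, rfl⟩, (hmem u₀).mpr rfl⟩, ?_⟩
  rintro X ⟨hX1, hX2⟩
  obtain ⟨u, rfl⟩ := hX1
  rw [(hmem u).mp hX2]
end
end
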